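/- arXiv:0910.1306 — 10 statements merged into one kernel-verified Lean document; each statement's English description precedes it below -/
import Mathlib

section
/- Cyclicity of the symmetric monoidal trace: Let C be a symmetric monoidal category, let (M, M∨, η_M, ε_M) and (N, N∨, η_N, ε_N) be dual pairs in C, and let f : Q ⊗ M → N ⊗ P and g : K ⊗ N → M ⊗ L be morphisms. Then tr((g ⊗ id_P) ∘ (id_K ⊗ f)) = tr((id_N ⊗ s_{P,L}) ∘ (f ⊗ id_L) ∘ (id_Q ⊗ g) ∘ (s_{K,Q} ⊗ id_N)) as morphisms K ⊗ Q → L ⊗ P, where the left-hand trace is taken with respect to the dual pair (M, M∨) and the right-hand trace with respect to (N, N∨), s denotes the symmetry, and associativity isomorphisms are inserted as needed. -/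
open CategoryTheory Category MonoidalCategory

universe v u v' u'

/-- The data of a candidate dual pair in a monoidal category: an object `M`, an object `Mv`,
a coevaluation `η : 𝟙_ C ⟶ M ⊗ Mv` and an evaluation `ε : Mv ⊗ M ⟶ 𝟙_ C`. -/
structure MonDualData (C : Type u) [Category.{v} C] [MonoidalCategory C] where
  M : C
  Mv : C
  η : 𝟙_ C ⟶ M ⊗ Mv
  ε : Mv ⊗ M ⟶ 𝟙_ C

/-- The two triangle identities, saying that `(M, Mv, η, ε)` is a dual pair. -/
def MonDualData.IsDualPair {C : Type u} [Category.{v} C] [MonoidalCategory C]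
    (D : MonDualData C) : Prop :=
  ((λ_ D.M).inv ≫ (D.η ▷ D.M) ≫ (α_ D.M D.Mv D.M).hom ≫ (D.M ◁ D.ε) ≫ (ρ_ D.M).hom
      = 𝟙 D.M) ∧
  ((ρ_ D.Mv).inv ≫ (D.Mv ◁ D.η) ≫ (α_ D.Mv D.M D.Mv).inv ≫ (D.ε ▷ D.Mv) ≫ (λ_ D.Mv).hom
      = 𝟙 D.Mv)

/-- The trace of `f : Q ⊗ M ⟶ M ⊗ P` with respect to a (candidate) dual pair for `M`,
in a symmetric monoidal category. -/
def mtrace {C : Type u} [Category.{v} C] [MonoidalCategory C] [SymmetricCategory C]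
    (D : MonDualData C) {Q P : C} (f : Q ⊗ D.M ⟶ D.M ⊗ P) : Q ⟶ P :=
  (ρ_ Q).inv ≫ (Q ◁ D.η) ≫ (α_ Q D.M D.Mv).inv ≫ (f ▷ D.Mv) ≫
    (β_ (D.M ⊗ P) D.Mv).hom ≫ (α_ D.Mv D.M P).inv ≫ (D.ε ▷ P) ≫ (λ_ P).hom


set_option maxHeartbeats 1600000

open BraidedCategory

section MtraceAux

variable {C : Type u} [Category.{v} C] [MonoidalCategory C] [SymmetricCategory C]

lemma snake_base (M V : C) (η : 𝟙_ C ⟶ M ⊗ V) (ε : V ⊗ M ⟶ 𝟙_ C)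
    (h : (λ_ M).inv ≫ (η ▷ M) ≫ (α_ M V M).hom ≫ (M ◁ ε) ≫ (ρ_ M).hom = 𝟙 M) :
    (ρ_ M).inv ≫ (M ◁ (η ≫ (β_ M V).hom)) ≫ (α_ M V M).inv ≫
      ((β_ M V).hom ▷ M) ≫ (ε ▷ M) ≫ (λ_ M).hom = 𝟙 M := by
  calc
    _ = 𝟙 _ ⊗≫ (M ◁ (η ≫ (β_ M V).hom) ≫ (β_ M (V ⊗ M)).hom) ⊗≫
        (V ◁ (β_ M M).hom) ⊗≫ (ε ▷ M) ⊗≫ 𝟙 _ := by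
      rw [show (β_ M V).hom ▷ M =
          (α_ M V M).hom ≫ (β_ M (V ⊗ M)).hom ≫ (α_ V M M).hom ≫ (V ◁ (β_ M M).hom) ≫
            (α_ V M M).inv by
        rw [braiding_tensor_right_hom]
        simp only [Category.assoc, Iso.hom_inv_id_assoc, Iso.inv_hom_id_assoc, Iso.hom_inv_id,
          Iso.inv_hom_id, comp_id]
        rw [← MonoidalCategory.whiskerLeft_comp_assoc, SymmetricCategory.symmetry,
          MonoidalCategory.whiskerLeft_id, id_comp, Iso.hom_inv_id, comp_id]]
      monoidal
    _ = 𝟙 _ ⊗≫ ((η ≫ (β_ M V).hom) ▷ M) ⊗≫ (V ◁ (β_ M M).hom) ⊗≫ (ε ▷ M) ⊗≫ 𝟙 _ := by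
      rw [braiding_naturality_right, braiding_tensorUnit_right]
      monoidal
    _ = 𝟙 _ ⊗≫ (η ▷ M) ⊗≫ ((α_ M V M).inv ≫ ((β_ M V).hom ▷ M) ≫ (α_ V M M).hom ≫
          (V ◁ (β_ M M).hom) ≫ (α_ V M M).inv) ⊗≫ (ε ▷ M) ⊗≫ 𝟙 _ := by
      rw [comp_whiskerRight]; monoidal
    _ = 𝟙 _ ⊗≫ (η ▷ M) ⊗≫ ((β_ M (V ⊗ M)).hom ≫ (ε ▷ M)) ⊗≫ 𝟙 _ := by
      rw [← braiding_tensor_right_hom]; monoidal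
    _ = 𝟙 _ ⊗≫ (η ▷ M) ⊗≫ (M ◁ ε) ⊗≫ 𝟙 _ := by
      rw [← braiding_naturality_right, braiding_tensorUnit_right]
      monoidal
    _ = (λ_ M).inv ≫ (η ▷ M) ≫ (α_ M V M).hom ≫ (M ◁ ε) ≫ (ρ_ M).hom := by monoidal
    _ = 𝟙 M := h

lemma snake_gen (M V : C) (η : 𝟙_ C ⟶ M ⊗ V) (ε : V ⊗ M ⟶ 𝟙_ C)
    (h : (λ_ M).inv ≫ (η ▷ M) ≫ (α_ M V M).hom ≫ (M ◁ ε) ≫ (ρ_ M).hom = 𝟙 M) (R : C) :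
    (ρ_ (M ⊗ R)).inv ≫ (((M ⊗ R : C)) ◁ (η ≫ (β_ M V).hom)) ≫ (α_ (M ⊗ R) V M).inv ≫
      ((β_ (M ⊗ R) V).hom ▷ M) ≫ (α_ V (M ⊗ R) M).hom ≫ (V ◁ (α_ M R M).hom) ≫
      (α_ V M (R ⊗ M)).inv ≫ (ε ▷ ((R ⊗ M : C))) ≫ (λ_ (R ⊗ M)).hom = (β_ M R).hom := by
  have hdec2 : (β_ R V).hom ▷ M = (α_ R V M).hom ≫ (β_ R (V ⊗ M)).hom ≫ (α_ V M R).hom ≫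
      (V ◁ (β_ M R).hom) ≫ (α_ V R M).inv := by
    rw [braiding_tensor_right_hom]
    simp only [Category.assoc, Iso.hom_inv_id_assoc, Iso.inv_hom_id_assoc, Iso.hom_inv_id,
      Iso.inv_hom_id, comp_id]
    rw [← MonoidalCategory.whiskerLeft_comp_assoc, SymmetricCategory.symmetry,
      MonoidalCategory.whiskerLeft_id, id_comp, Iso.hom_inv_id, comp_id]
  calc
    _ = 𝟙 _ ⊗≫ (((M ⊗ R : C)) ◁ (η ≫ (β_ M V).hom)) ⊗≫ (M ◁ ((β_ R V).hom ▷ M)) ⊗≫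
        ((β_ M V).hom ▷ ((R ⊗ M : C))) ⊗≫ (ε ▷ ((R ⊗ M : C))) ⊗≫ 𝟙 _ := by
      rw [braiding_tensor_left_hom M R V]; monoidal
    _ = 𝟙 _ ⊗≫ (M ◁ ((R ◁ (η ≫ (β_ M V).hom)) ≫ (β_ R (V ⊗ M)).hom)) ⊗≫
        (((M ⊗ V : C)) ◁ (β_ M R).hom) ⊗≫ ((β_ M V).hom ▷ ((R ⊗ M : C))) ⊗≫ (ε ▷ ((R ⊗ M : C))) ⊗≫ 𝟙 _ := by
      rw [hdec2]; monoidal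
    _ = 𝟙 _ ⊗≫ (M ◁ ((η ≫ (β_ M V).hom) ▷ R)) ⊗≫
        ((((M ⊗ V : C)) ◁ (β_ M R).hom) ≫ ((β_ M V).hom ▷ ((R ⊗ M : C)))) ⊗≫ (ε ▷ ((R ⊗ M : C))) ⊗≫ 𝟙 _ := by
      rw [braiding_naturality_right R (η ≫ (β_ M V).hom), braiding_tensorUnit_right]
      monoidal
    _ = 𝟙 _ ⊗≫ (M ◁ ((η ≫ (β_ M V).hom) ▷ R)) ⊗≫ ((β_ M V).hom ▷ ((M ⊗ R : C))) ⊗≫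
        ((((V ⊗ M : C)) ◁ (β_ M R).hom) ≫ (ε ▷ ((R ⊗ M : C)))) ⊗≫ 𝟙 _ := by
      rw [whisker_exchange ((β_ M V).hom) ((β_ M R).hom)]; monoidal
    _ = 𝟙 _ ⊗≫ (((ρ_ M).inv ≫ (M ◁ (η ≫ (β_ M V).hom)) ≫ (α_ M V M).inv ≫
          ((β_ M V).hom ▷ M) ≫ (ε ▷ M) ≫ (λ_ M).hom) ▷ R) ⊗≫ (β_ M R).hom ⊗≫ 𝟙 _ := by
      rw [whisker_exchange ε ((β_ M R).hom)]; monoidal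
    _ = (β_ M R).hom := by rw [snake_base M V η ε h]; monoidal

lemma slide3 (A B Z : C) (d : A ⊗ B ⟶ 𝟙_ C) :
    ((β_ A Z).hom ▷ B) ≫ (α_ Z A B).hom ≫ (Z ◁ d) ≫ (ρ_ Z).hom =
      (α_ A Z B).hom ≫ (A ◁ (β_ Z B).hom) ≫ (α_ A B Z).inv ≫ (d ▷ Z) ≫ (λ_ Z).hom := by
  have h1 : (d ▷ Z) ≫ (λ_ Z).hom = (β_ (A ⊗ B) Z).hom ≫ (Z ◁ d) ≫ (ρ_ Z).hom := by
    rw [← braiding_naturality_left_assoc d Z, braiding_tensorUnit_left]; simp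
  rw [h1, braiding_tensor_left_hom A B Z]
  simp only [Category.assoc, Iso.inv_hom_id_assoc, Iso.hom_inv_id_assoc]
  rw [← MonoidalCategory.whiskerLeft_comp_assoc, SymmetricCategory.symmetry,
    MonoidalCategory.whiskerLeft_id, id_comp, Iso.hom_inv_id_assoc]

end MtraceAux

/-- Cyclicity of the symmetric monoidal trace:
`tr((g ⊗ id_P) ∘ (id_K ⊗ f)) = tr((id_N ⊗ s) ∘ (f ⊗ id_L) ∘ (id_Q ⊗ g) ∘ (s ⊗ id_N))`,
the left trace taken with respect to `(M, M∨)` and the right one with respect to `(N, N∨)`. -/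
theorem mtrace_cyclicity {C : Type u} [Category.{v} C] [MonoidalCategory C]
    [SymmetricCategory C] (DM DN : MonDualData C)
    (hM : DM.IsDualPair) (hN : DN.IsDualPair) {Q P K L : C}
    (f : Q ⊗ DM.M ⟶ DN.M ⊗ P) (g : K ⊗ DN.M ⟶ DM.M ⊗ L) :
    mtrace DM ((α_ K Q DM.M).hom ≫ (K ◁ f) ≫ (α_ K DN.M P).inv ≫ (g ▷ P) ≫
        (α_ DM.M L P).hom)
      = mtrace DN (((β_ K Q).hom ▷ DN.M) ≫ (α_ Q K DN.M).hom ≫ (Q ◁ g) ≫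
          (α_ Q DM.M L).inv ≫ (f ▷ L) ≫ (α_ DN.M P L).hom ≫ (DN.M ◁ (β_ P L).hom)) := by
  obtain ⟨M, V, η, ε⟩ := DM
  obtain ⟨N, W, θ, δ⟩ := DN
  obtain ⟨hM1, hM2⟩ := hM
  obtain ⟨hN1, hN2⟩ := hN
  dsimp only at f g hM1 hM2 hN1 hN2 ⊢
  have hLM : ((L : C) ◁ (β_ M (W ⊗ Q)).hom) =
      (α_ L M (W ⊗ Q)).inv ≫ (β_ (L ⊗ M) (W ⊗ Q)).hom ≫ (α_ (W ⊗ Q) L M).inv ≫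
        ((β_ (W ⊗ Q) L).hom ▷ M) ≫ (α_ L (W ⊗ Q) M).hom := by
    rw [braiding_tensor_left_hom L M (W ⊗ Q)]
    simp only [Category.assoc, Iso.inv_hom_id_assoc, Iso.hom_inv_id_assoc]
    rw [← comp_whiskerRight_assoc, SymmetricCategory.symmetry, id_whiskerRight, id_comp,
      Iso.inv_hom_id, comp_id]
  have hins : ((θ ≫ (β_ N W).hom) ▷ Q) =
      (λ_ Q).hom ≫ (ρ_ Q).inv ≫ (Q ◁ (θ ≫ (β_ N W).hom)) ≫ (β_ Q (W ⊗ N)).hom := by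
    rw [braiding_naturality_right Q (θ ≫ (β_ N W).hom), braiding_tensorUnit_right]; simp
  calc
    _ = 𝟙 _ ⊗≫ ((K ⊗ Q : C) ◁ η) ⊗≫
        ((((α_ K Q M).hom ≫ (K ◁ f) ≫ (α_ K N P).inv ≫ (g ▷ P) ≫ (α_ M L P).hom) ▷ V) ≫
          (β_ (M ⊗ (L ⊗ P)) V).hom) ⊗≫ (ε ▷ (L ⊗ P : C)) ⊗≫ 𝟙 _ := by
      dsimp only [mtrace]; monoidal
    _ = 𝟙 _ ⊗≫ ((K ⊗ Q : C) ◁ (η ≫ (β_ M V).hom)) ⊗≫ ((β_ (K ⊗ Q) V).hom ▷ M) ⊗≫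
        (V ◁ ((α_ K Q M).hom ≫ (K ◁ f) ≫ (α_ K N P).inv ≫ (g ▷ P) ≫ (α_ M L P).hom)) ⊗≫
        (ε ▷ (L ⊗ P : C)) ⊗≫ 𝟙 _ := by
      rw [braiding_naturality_left ((α_ K Q M).hom ≫ (K ◁ f) ≫ (α_ K N P).inv ≫ (g ▷ P) ≫
        (α_ M L P).hom) V, braiding_tensor_left_hom]
      monoidal
    _ = 𝟙 _ ⊗≫ ((K ⊗ Q : C) ◁ (η ≫ (β_ M V).hom)) ⊗≫ ((β_ (K ⊗ Q) V).hom ▷ M) ⊗≫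
        (V ◁ ((α_ K Q M).hom ≫ (K ◁ (f ≫ (((λ_ N).inv ≫ (θ ▷ N) ≫ (α_ N W N).hom ≫
            (N ◁ δ) ≫ (ρ_ N).hom) ▷ P))) ≫ (α_ K N P).inv ≫ (g ▷ P) ≫ (α_ M L P).hom)) ⊗≫
        (ε ▷ (L ⊗ P : C)) ⊗≫ 𝟙 _ := by
      rw [hN1]; monoidal
    _ = 𝟙 _ ⊗≫ ((K ⊗ Q : C) ◁ (η ≫ (β_ M V).hom)) ⊗≫ ((β_ (K ⊗ Q) V).hom ▷ M) ⊗≫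
        (V ◁ (((α_ K Q M).hom ≫ (K ◁ f) ≫ (K ◁ (λ_ (N ⊗ P)).inv) ≫ (K ◁ (θ ▷ (N ⊗ P))) ≫
            (K ◁ (α_ N W (N ⊗ P)).hom) ≫ (α_ K N (W ⊗ (N ⊗ P))).inv) ≫
          (((K ⊗ N : C) ◁ ((α_ W N P).inv ≫ (δ ▷ P) ≫ (λ_ P).hom)) ≫ (g ▷ P)) ≫
          (α_ M L P).hom)) ⊗≫
        (ε ▷ (L ⊗ P : C)) ⊗≫ 𝟙 _ := by
      monoidal
    _ = 𝟙 _ ⊗≫ ((K ⊗ Q : C) ◁ (η ≫ (β_ M V).hom)) ⊗≫ ((β_ (K ⊗ Q) V).hom ▷ M) ⊗≫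
        (V ◁ ((α_ K Q M).hom ≫
          (K ◁ ((λ_ (Q ⊗ M)).inv ≫ (((𝟙_ C : C) ◁ f) ≫ (θ ▷ (N ⊗ P : C))) ≫
            (α_ N W (N ⊗ P)).hom)) ≫
          (α_ K N (W ⊗ (N ⊗ P))).inv ≫ (g ▷ (W ⊗ (N ⊗ P) : C)) ≫
          ((M ⊗ L : C) ◁ ((α_ W N P).inv ≫ (δ ▷ P) ≫ (λ_ P).hom)) ≫ (α_ M L P).hom)) ⊗≫
        (ε ▷ (L ⊗ P : C)) ⊗≫ 𝟙 _ := by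
      rw [whisker_exchange g ((α_ W N P).inv ≫ (δ ▷ P) ≫ (λ_ P).hom)]; monoidal
    _ = 𝟙 _ ⊗≫ ((K ⊗ Q : C) ◁ (η ≫ (β_ M V).hom)) ⊗≫ ((β_ (K ⊗ Q) V).hom ▷ M) ⊗≫
        (V ◁ ((α_ K Q M).hom ≫
          (K ◁ ((λ_ (Q ⊗ M)).inv ≫ (θ ▷ (Q ⊗ M : C)) ≫ (α_ N W (Q ⊗ M)).hom)) ≫
          (α_ K N (W ⊗ (Q ⊗ M))).inv ≫
          (((K ⊗ N : C) ◁ ((W : C) ◁ f)) ≫ (g ▷ (W ⊗ (N ⊗ P) : C))) ≫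
          ((M ⊗ L : C) ◁ ((α_ W N P).inv ≫ (δ ▷ P) ≫ (λ_ P).hom)) ≫ (α_ M L P).hom)) ⊗≫
        (ε ▷ (L ⊗ P : C)) ⊗≫ 𝟙 _ := by
      rw [whisker_exchange θ f]; monoidal
    _ = 𝟙 _ ⊗≫ ((K ⊗ Q : C) ◁ (η ≫ (β_ M V).hom)) ⊗≫
        ((((β_ (K ⊗ Q) V).hom) ≫ (V ◁ ((K ◁ (λ_ Q).inv) ≫ (K ◁ (θ ▷ Q)) ≫
            (K ◁ (α_ N W Q).hom) ≫ (α_ K N (W ⊗ Q)).inv ≫ (g ▷ (W ⊗ Q : C)) ≫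
            (α_ M L (W ⊗ Q)).hom))) ▷ M) ⊗≫
        ((((V ⊗ M : C)) ◁ (((L ⊗ W : C) ◁ f) ≫ (α_ L W (N ⊗ P)).hom ≫
            ((L : C) ◁ ((α_ W N P).inv ≫ (δ ▷ P) ≫ (λ_ P).hom)))) ≫
          (ε ▷ (L ⊗ P : C))) ⊗≫ 𝟙 _ := by
      rw [whisker_exchange g ((W : C) ◁ f)]; monoidal
    _ = 𝟙 _ ⊗≫ ((K ⊗ Q : C) ◁ (η ≫ (β_ M V).hom)) ⊗≫
        ((((β_ (K ⊗ Q) V).hom) ≫ (V ◁ ((K ◁ (λ_ Q).inv) ≫ (K ◁ (θ ▷ Q)) ≫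
            (K ◁ (α_ N W Q).hom) ≫ (α_ K N (W ⊗ Q)).inv ≫ (g ▷ (W ⊗ Q : C)) ≫
            (α_ M L (W ⊗ Q)).hom))) ▷ M) ⊗≫
        (ε ▷ ((L ⊗ (W ⊗ Q)) ⊗ M : C)) ⊗≫
        (((L ⊗ W : C)) ◁ f) ⊗≫ ((L : C) ◁ ((α_ W N P).inv ≫ (δ ▷ P) ≫ (λ_ P).hom)) ⊗≫
        𝟙 _ := by
      rw [whisker_exchange ε (((L ⊗ W : C) ◁ f) ≫ (α_ L W (N ⊗ P)).hom ≫
          ((L : C) ◁ ((α_ W N P).inv ≫ (δ ▷ P) ≫ (λ_ P).hom)))]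
      monoidal
    _ = 𝟙 _ ⊗≫ (((K ⊗ Q : C) ◁ (η ≫ (β_ M V).hom)) ≫
          (((K ◁ (λ_ Q).inv) ≫ (K ◁ (θ ▷ Q)) ≫ (K ◁ (α_ N W Q).hom) ≫
            (α_ K N (W ⊗ Q)).inv ≫ (g ▷ (W ⊗ Q : C)) ≫ (α_ M L (W ⊗ Q)).hom) ▷
              (V ⊗ M : C))) ⊗≫
        ((β_ (M ⊗ (L ⊗ (W ⊗ Q))) V).hom ▷ M) ⊗≫
        (ε ▷ ((L ⊗ (W ⊗ Q)) ⊗ M : C)) ⊗≫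
        (((L ⊗ W : C)) ◁ f) ⊗≫ ((L : C) ◁ ((α_ W N P).inv ≫ (δ ▷ P) ≫ (λ_ P).hom)) ⊗≫
        𝟙 _ := by
      rw [← braiding_naturality_left ((K ◁ (λ_ Q).inv) ≫ (K ◁ (θ ▷ Q)) ≫
          (K ◁ (α_ N W Q).hom) ≫ (α_ K N (W ⊗ Q)).inv ≫ (g ▷ (W ⊗ Q : C)) ≫
          (α_ M L (W ⊗ Q)).hom) V]
      monoidal
    _ = 𝟙 _ ⊗≫ ((K ◁ (λ_ Q).inv) ≫ (K ◁ (θ ▷ Q)) ≫ (K ◁ (α_ N W Q).hom) ≫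
          (α_ K N (W ⊗ Q)).inv ≫ (g ▷ (W ⊗ Q : C)) ≫ (α_ M L (W ⊗ Q)).hom) ⊗≫
        ((ρ_ (M ⊗ (L ⊗ (W ⊗ Q)))).inv ≫
          ((M ⊗ (L ⊗ (W ⊗ Q)) : C) ◁ (η ≫ (β_ M V).hom)) ≫
          (α_ (M ⊗ (L ⊗ (W ⊗ Q))) V M).inv ≫
          ((β_ (M ⊗ (L ⊗ (W ⊗ Q))) V).hom ▷ M) ≫
          (α_ V (M ⊗ (L ⊗ (W ⊗ Q))) M).hom ≫
          ((V : C) ◁ (α_ M (L ⊗ (W ⊗ Q)) M).hom) ≫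
          (α_ V M ((L ⊗ (W ⊗ Q)) ⊗ M)).inv ≫
          (ε ▷ ((L ⊗ (W ⊗ Q)) ⊗ M : C)) ≫ (λ_ ((L ⊗ (W ⊗ Q)) ⊗ M)).hom) ⊗≫
        (((L ⊗ W : C)) ◁ f) ⊗≫ ((L : C) ◁ ((α_ W N P).inv ≫ (δ ▷ P) ≫ (λ_ P).hom)) ⊗≫
        𝟙 _ := by
      rw [whisker_exchange ((K ◁ (λ_ Q).inv) ≫ (K ◁ (θ ▷ Q)) ≫ (K ◁ (α_ N W Q).hom) ≫
          (α_ K N (W ⊗ Q)).inv ≫ (g ▷ (W ⊗ Q : C)) ≫ (α_ M L (W ⊗ Q)).hom)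
          (η ≫ (β_ M V).hom)]
      monoidal
    _ = 𝟙 _ ⊗≫ ((K ◁ (λ_ Q).inv) ≫ (K ◁ (θ ▷ Q)) ≫ (K ◁ (α_ N W Q).hom) ≫
          (α_ K N (W ⊗ Q)).inv ≫ (g ▷ (W ⊗ Q : C)) ≫ (α_ M L (W ⊗ Q)).hom) ⊗≫
        (β_ M (L ⊗ (W ⊗ Q))).hom ⊗≫
        (((L ⊗ W : C)) ◁ f) ⊗≫ ((L : C) ◁ ((α_ W N P).inv ≫ (δ ▷ P) ≫ (λ_ P).hom)) ⊗≫
        𝟙 _ := by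
      rw [snake_gen M V η ε hM1 (L ⊗ (W ⊗ Q))]
    _ = 𝟙 _ ⊗≫ (K ◁ ((λ_ Q).inv ≫ (θ ▷ Q) ≫ (α_ N W Q).hom)) ⊗≫
        ((g ≫ (β_ M L).hom) ▷ (W ⊗ Q : C)) ⊗≫ ((L : C) ◁ (β_ M (W ⊗ Q)).hom) ⊗≫
        ((L ⊗ W : C) ◁ f) ⊗≫
        ((L : C) ◁ ((α_ W N P).inv ≫ (δ ▷ P) ≫ (λ_ P).hom)) ⊗≫ 𝟙 _ := by
      rw [braiding_tensor_right_hom M L (W ⊗ Q)]; monoidal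
    _ = 𝟙 _ ⊗≫ (K ◁ ((λ_ Q).inv ≫ (θ ▷ Q) ≫ (α_ N W Q).hom)) ⊗≫
        ((((g ≫ (β_ M L).hom) ▷ (W ⊗ Q : C))) ≫ (β_ (L ⊗ M) (W ⊗ Q)).hom) ⊗≫
        ((β_ (W ⊗ Q) L).hom ▷ M) ⊗≫ ((L ⊗ W : C) ◁ f) ⊗≫
        ((L : C) ◁ ((α_ W N P).inv ≫ (δ ▷ P) ≫ (λ_ P).hom)) ⊗≫ 𝟙 _ := by
      rw [hLM]; monoidal
    _ = 𝟙 _ ⊗≫ (K ◁ ((λ_ Q).inv ≫ (θ ▷ Q) ≫ (α_ N W Q).hom)) ⊗≫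
        ((β_ (K ⊗ N) (W ⊗ Q)).hom) ⊗≫ ((W ⊗ Q : C) ◁ (g ≫ (β_ M L).hom)) ⊗≫
        ((β_ (W ⊗ Q) L).hom ▷ M) ⊗≫ ((L ⊗ W : C) ◁ f) ⊗≫
        ((L : C) ◁ ((α_ W N P).inv ≫ (δ ▷ P) ≫ (λ_ P).hom)) ⊗≫ 𝟙 _ := by
      rw [braiding_naturality_left (g ≫ (β_ M L).hom) (W ⊗ Q)]; monoidal
    _ = 𝟙 _ ⊗≫ (K ◁ ((λ_ Q).inv ≫ ((θ ≫ (β_ N W).hom) ▷ Q))) ⊗≫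
        (K ◁ ((W : C) ◁ (β_ N Q).hom)) ⊗≫ ((β_ K (W ⊗ Q)).hom ▷ N) ⊗≫
        ((W ⊗ Q : C) ◁ (g ≫ (β_ M L).hom)) ⊗≫
        ((β_ (W ⊗ Q) L).hom ▷ M) ⊗≫ ((L ⊗ W : C) ◁ f) ⊗≫
        ((L : C) ◁ ((α_ W N P).inv ≫ (δ ▷ P) ≫ (λ_ P).hom)) ⊗≫ 𝟙 _ := by
      rw [braiding_tensor_left_hom K N (W ⊗ Q), braiding_tensor_right_hom N W Q]; monoidal
    _ = 𝟙 _ ⊗≫ ((K ⊗ Q : C) ◁ (θ ≫ (β_ N W).hom)) ⊗≫ (K ◁ (β_ Q (W ⊗ N)).hom) ⊗≫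
        (K ◁ ((W : C) ◁ (β_ N Q).hom)) ⊗≫ ((β_ K (W ⊗ Q)).hom ▷ N) ⊗≫
        ((W ⊗ Q : C) ◁ (g ≫ (β_ M L).hom)) ⊗≫
        ((β_ (W ⊗ Q) L).hom ▷ M) ⊗≫ ((L ⊗ W : C) ◁ f) ⊗≫
        ((L : C) ◁ ((α_ W N P).inv ≫ (δ ▷ P) ≫ (λ_ P).hom)) ⊗≫ 𝟙 _ := by
      rw [hins]; monoidal
    _ = 𝟙 _ ⊗≫ ((K ⊗ Q : C) ◁ (θ ≫ (β_ N W).hom)) ⊗≫ (K ◁ ((β_ Q W).hom ▷ N)) ⊗≫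
        (K ◁ ((W : C) ◁ ((β_ Q N).hom ≫ (β_ N Q).hom))) ⊗≫ ((β_ K (W ⊗ Q)).hom ▷ N) ⊗≫
        ((W ⊗ Q : C) ◁ (g ≫ (β_ M L).hom)) ⊗≫
        ((β_ (W ⊗ Q) L).hom ▷ M) ⊗≫ ((L ⊗ W : C) ◁ f) ⊗≫
        ((L : C) ◁ ((α_ W N P).inv ≫ (δ ▷ P) ≫ (λ_ P).hom)) ⊗≫ 𝟙 _ := by
      rw [braiding_tensor_right_hom Q W N]; monoidal
    _ = 𝟙 _ ⊗≫ ((K ⊗ Q : C) ◁ (θ ≫ (β_ N W).hom)) ⊗≫ (K ◁ ((β_ Q W).hom ▷ N)) ⊗≫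
        ((β_ K (W ⊗ Q)).hom ▷ N) ⊗≫
        ((W ⊗ Q : C) ◁ (g ≫ (β_ M L).hom)) ⊗≫
        ((β_ (W ⊗ Q) L).hom ▷ M) ⊗≫ ((L ⊗ W : C) ◁ f) ⊗≫
        ((L : C) ◁ ((α_ W N P).inv ≫ (δ ▷ P) ≫ (λ_ P).hom)) ⊗≫ 𝟙 _ := by
      rw [SymmetricCategory.symmetry]; monoidal
    _ = 𝟙 _ ⊗≫ ((K ⊗ Q : C) ◁ (θ ≫ (β_ N W).hom)) ⊗≫ (K ◁ ((β_ Q W).hom ▷ N)) ⊗≫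
        ((β_ K (W ⊗ Q)).hom ▷ N) ⊗≫
        ((W ⊗ Q : C) ◁ (g ≫ (β_ M L).hom)) ⊗≫ ((W ◁ (β_ Q L).hom) ▷ M) ⊗≫
        (((β_ W L).hom ▷ (Q ⊗ M : C)) ≫ ((L ⊗ W : C) ◁ f)) ⊗≫
        ((L : C) ◁ ((α_ W N P).inv ≫ (δ ▷ P) ≫ (λ_ P).hom)) ⊗≫ 𝟙 _ := by
      rw [braiding_tensor_left_hom W Q L]; monoidal
    _ = 𝟙 _ ⊗≫ ((K ⊗ Q : C) ◁ (θ ≫ (β_ N W).hom)) ⊗≫ (K ◁ ((β_ Q W).hom ▷ N)) ⊗≫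
        ((β_ K (W ⊗ Q)).hom ▷ N) ⊗≫
        ((W ⊗ Q : C) ◁ (g ≫ (β_ M L).hom)) ⊗≫ ((W ◁ (β_ Q L).hom) ▷ M) ⊗≫
        ((W ⊗ L : C) ◁ f) ⊗≫
        ((((β_ W L).hom ▷ N) ≫ (α_ L W N).hom ≫ ((L : C) ◁ δ) ≫ (ρ_ L).hom) ▷ P) ⊗≫
        𝟙 _ := by
      rw [← whisker_exchange ((β_ W L).hom) f]; monoidal
    _ = 𝟙 _ ⊗≫ ((K ⊗ Q : C) ◁ (θ ≫ (β_ N W).hom)) ⊗≫ (K ◁ ((β_ Q W).hom ▷ N)) ⊗≫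
        ((β_ K (W ⊗ Q)).hom ▷ N) ⊗≫
        ((W ⊗ Q : C) ◁ (g ≫ (β_ M L).hom)) ⊗≫ ((W ◁ (β_ Q L).hom) ▷ M) ⊗≫
        ((W ⊗ L : C) ◁ f) ⊗≫
        (((α_ W L N).hom ≫ ((W : C) ◁ (β_ L N).hom) ≫ (α_ W N L).inv ≫ (δ ▷ L) ≫
          (λ_ L).hom) ▷ P) ⊗≫ 𝟙 _ := by
      rw [slide3 W N L δ]
    _ = 𝟙 _ ⊗≫ ((K ⊗ Q : C) ◁ (θ ≫ (β_ N W).hom)) ⊗≫ (K ◁ ((β_ Q W).hom ▷ N)) ⊗≫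
        ((β_ K (W ⊗ Q)).hom ▷ N) ⊗≫
        ((W ⊗ Q : C) ◁ g) ⊗≫
        ((W : C) ◁ ((α_ Q M L).hom ≫ (Q ◁ (β_ M L).hom) ≫ (α_ Q L M).inv ≫
          ((β_ Q L).hom ▷ M) ≫ (α_ L Q M).hom)) ⊗≫
        ((W ⊗ L : C) ◁ f) ⊗≫ ((W : C) ◁ ((β_ L N).hom ▷ P)) ⊗≫
        (δ ▷ (L ⊗ P : C)) ⊗≫ 𝟙 _ := by
      monoidal
    _ = 𝟙 _ ⊗≫ ((K ⊗ Q : C) ◁ (θ ≫ (β_ N W).hom)) ⊗≫ (K ◁ ((β_ Q W).hom ▷ N)) ⊗≫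
        ((β_ K (W ⊗ Q)).hom ▷ N) ⊗≫
        ((W ⊗ Q : C) ◁ g) ⊗≫
        ((W : C) ◁ ((β_ (Q ⊗ M) L).hom ≫ ((L : C) ◁ f))) ⊗≫
        ((W : C) ◁ ((β_ L N).hom ▷ P)) ⊗≫
        (δ ▷ (L ⊗ P : C)) ⊗≫ 𝟙 _ := by
      rw [← braiding_tensor_left_hom Q M L]; monoidal
    _ = 𝟙 _ ⊗≫ ((K ⊗ Q : C) ◁ (θ ≫ (β_ N W).hom)) ⊗≫ (K ◁ ((β_ Q W).hom ▷ N)) ⊗≫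
        ((β_ K (W ⊗ Q)).hom ▷ N) ⊗≫
        ((W ⊗ Q : C) ◁ g) ⊗≫
        ((W : C) ◁ (f ▷ L)) ⊗≫ ((W : C) ◁ (β_ (N ⊗ P) L).hom) ⊗≫
        ((W : C) ◁ ((β_ L N).hom ▷ P)) ⊗≫
        (δ ▷ (L ⊗ P : C)) ⊗≫ 𝟙 _ := by
      rw [← braiding_naturality_left f L]; monoidal
    _ = 𝟙 _ ⊗≫ ((K ⊗ Q : C) ◁ (θ ≫ (β_ N W).hom)) ⊗≫ (K ◁ ((β_ Q W).hom ▷ N)) ⊗≫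
        ((β_ K (W ⊗ Q)).hom ▷ N) ⊗≫
        ((W ⊗ Q : C) ◁ g) ⊗≫
        ((W : C) ◁ (f ▷ L)) ⊗≫ ((W : C) ◁ (N ◁ (β_ P L).hom)) ⊗≫
        ((W : C) ◁ (((β_ N L).hom ≫ (β_ L N).hom) ▷ P)) ⊗≫
        (δ ▷ (L ⊗ P : C)) ⊗≫ 𝟙 _ := by
      rw [braiding_tensor_left_hom N P L]; monoidal
    _ = 𝟙 _ ⊗≫ ((K ⊗ Q : C) ◁ (θ ≫ (β_ N W).hom)) ⊗≫ (K ◁ ((β_ Q W).hom ▷ N)) ⊗≫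
        ((β_ K (W ⊗ Q)).hom ▷ N) ⊗≫
        ((W ⊗ Q : C) ◁ g) ⊗≫
        ((W : C) ◁ (f ▷ L)) ⊗≫ ((W : C) ◁ (N ◁ (β_ P L).hom)) ⊗≫
        (δ ▷ (L ⊗ P : C)) ⊗≫ 𝟙 _ := by
      rw [SymmetricCategory.symmetry]; monoidal
    _ = 𝟙 _ ⊗≫ ((K ⊗ Q : C) ◁ (θ ≫ (β_ N W).hom)) ⊗≫ (K ◁ ((β_ Q W).hom ▷ N)) ⊗≫
        ((β_ K W).hom ▷ (Q ⊗ N : C)) ⊗≫ ((W : C) ◁ ((β_ K Q).hom ▷ N)) ⊗≫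
        ((W ⊗ Q : C) ◁ g) ⊗≫
        ((W : C) ◁ (f ▷ L)) ⊗≫ ((W : C) ◁ (N ◁ (β_ P L).hom)) ⊗≫
        (δ ▷ (L ⊗ P : C)) ⊗≫ 𝟙 _ := by
      rw [braiding_tensor_right_hom K W Q]; monoidal
    _ = mtrace ⟨N, W, θ, δ⟩ (((β_ K Q).hom ▷ N) ≫ (α_ Q K N).hom ≫ (Q ◁ g) ≫
          (α_ Q M L).inv ≫ (f ▷ L) ≫ (α_ N P L).hom ≫ (N ◁ (β_ P L).hom)) := by
      dsimp only [mtrace]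
      rw [braiding_naturality_left_assoc (((β_ K Q).hom ▷ N) ≫ (α_ Q K N).hom ≫ (Q ◁ g) ≫
          (α_ Q M L).inv ≫ (f ▷ L) ≫ (α_ N P L).hom ≫ (N ◁ (β_ P L).hom)) W,
        braiding_tensor_left_hom (K ⊗ Q) N W, braiding_tensor_left_hom K Q W]
      monoidal
end

section
/- If (M, M∨, η_M, ε_M) and (N, N∨, η_N, ε_N) are dual pairs in a symmetric monoidal category C and f : M → N, g : N → M are morphisms, then tr(g ∘ f) = tr(f ∘ g) as morphisms I → I, where g ∘ f : M → M is regarded as a morphism I ⊗ M → M ⊗ I via the unitors (and similarly for f ∘ g), the first trace is taken with respect to (M, M∨) and the second with respect to (N, N∨). -/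
open CategoryTheory Category MonoidalCategory

universe v u v' u'

lemma mtrace_scalar {C : Type u} [Category.{v} C] [MonoidalCategory C] [SymmetricCategory C]
    (D : MonDualData C) (h : D.M ⟶ D.M) :
    mtrace D ((λ_ D.M).hom ≫ h ≫ (ρ_ D.M).inv)
      = D.η ≫ (h ▷ D.Mv) ≫ (β_ D.M D.Mv).hom ≫ D.ε := by
  simp only [mtrace, comp_whiskerRight, whisker_assoc, assoc]
  slice_lhs 6 7 => rw [BraidedCategory.braiding_naturality_left]
  monoidal

/-- An `ExactPairing` from a `MonDualData` satisfying the triangle identities. -/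
def MonDualData.exactPairing {C : Type u} [Category.{v} C] [MonoidalCategory C]
    (D : MonDualData C) (hD : D.IsDualPair) : ExactPairing D.M D.Mv where
  coevaluation' := D.η
  evaluation' := D.ε
  coevaluation_evaluation' := by
    have := hD.2
    rw [← cancel_epi (ρ_ D.Mv).hom, ← cancel_mono (λ_ D.Mv).inv] at *
    simpa using this
  evaluation_coevaluation' := by
    have := hD.1
    rw [← cancel_epi (λ_ D.M).hom, ← cancel_mono (ρ_ D.M).inv] at *
    simpa using this

lemma mtrace_chase {C : Type u} [Category.{v} C] [MonoidalCategory C] [SymmetricCategory C]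
    (X Y : C) [HasRightDual X] [HasRightDual Y] (f : X ⟶ Y) (g : Y ⟶ X) :
    η_ X (Xᘁ) ≫ ((f ≫ g) ▷ (Xᘁ)) ≫ (β_ X (Xᘁ)).hom ≫ ε_ X (Xᘁ)
      = η_ Y (Yᘁ) ≫ ((g ≫ f) ▷ (Yᘁ)) ≫ (β_ Y (Yᘁ)).hom ≫ ε_ Y (Yᘁ) := by
  calc η_ X (Xᘁ) ≫ ((f ≫ g) ▷ (Xᘁ)) ≫ (β_ X (Xᘁ)).hom ≫ ε_ X (Xᘁ)
      = η_ X (Xᘁ) ≫ (f ▷ (Xᘁ)) ≫ (g ▷ (Xᘁ)) ≫ (β_ X (Xᘁ)).hom ≫ ε_ X (Xᘁ) := by simp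
    _ = η_ Y (Yᘁ) ≫ (Y ◁ (fᘁ)) ≫ (g ▷ (Xᘁ)) ≫ (β_ X (Xᘁ)).hom ≫ ε_ X (Xᘁ) := by
        rw [← coevaluation_comp_rightAdjointMate_assoc f]
    _ = η_ Y (Yᘁ) ≫ (g ▷ (Yᘁ)) ≫ (X ◁ (fᘁ)) ≫ (β_ X (Xᘁ)).hom ≫ ε_ X (Xᘁ) := by
        rw [← whisker_exchange_assoc]
    _ = η_ Y (Yᘁ) ≫ (g ▷ (Yᘁ)) ≫ (β_ X (Yᘁ)).hom ≫ ((fᘁ) ▷ X) ≫ ε_ X (Xᘁ) := by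
        rw [BraidedCategory.braiding_naturality_right_assoc]
    _ = η_ Y (Yᘁ) ≫ (g ▷ (Yᘁ)) ≫ (β_ X (Yᘁ)).hom ≫ ((Yᘁ) ◁ f) ≫ ε_ Y (Yᘁ) := by
        rw [rightAdjointMate_comp_evaluation]
    _ = η_ Y (Yᘁ) ≫ ((g ≫ f) ▷ (Yᘁ)) ≫ (β_ Y (Yᘁ)).hom ≫ ε_ Y (Yᘁ) := by simp

/-- Commutativity of the symmetric monoidal trace: for dual pairs `(M, M∨)` and `(N, N∨)` and
morphisms `f : M ⟶ N`, `g : N ⟶ M`, one has `tr(g ∘ f) = tr(f ∘ g) : I ⟶ I`, where `g ∘ f`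
is regarded as a morphism `I ⊗ M ⟶ M ⊗ I` via the unitors (and similarly for `f ∘ g`),
the first trace taken with respect to `(M, M∨)` and the second with respect to `(N, N∨)`. -/
theorem mtrace_comm {C : Type u} [Category.{v} C] [MonoidalCategory C]
    [SymmetricCategory C] (DM DN : MonDualData C)
    (hM : DM.IsDualPair) (hN : DN.IsDualPair)
    (f : DM.M ⟶ DN.M) (g : DN.M ⟶ DM.M) :
    mtrace DM ((λ_ DM.M).hom ≫ (f ≫ g) ≫ (ρ_ DM.M).inv)
      = mtrace DN ((λ_ DN.M).hom ≫ (g ≫ f) ≫ (ρ_ DN.M).inv) := by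
  letI : ExactPairing DM.M DM.Mv := DM.exactPairing hM
  letI : ExactPairing DN.M DN.Mv := DN.exactPairing hN
  letI iM : HasRightDual DM.M := ⟨DM.Mv⟩
  letI iN : HasRightDual DN.M := ⟨DN.Mv⟩
  rw [mtrace_scalar, mtrace_scalar]
  exact mtrace_chase DM.M DN.M f g
end

section
/- Functoriality of the symmetric monoidal trace: Let F : C → D be a normal lax symmetric monoidal functor, let (M, M∨, η, ε) be a dual pair in C with c_{M,M∨} : F(M) ⊗ F(M∨) → F(M ⊗ M∨) invertible, let f : Q ⊗ M → M ⊗ P be a morphism in C, and assume c_{M,P} : F(M) ⊗ F(P) → F(M ⊗ P) is invertible. Then F(tr(f)) = tr(c_{M,P}⁻¹ ∘ F(f) ∘ c_{Q,M}) : F(Q) → F(P), where the left-hand trace is taken in C with respect to (M, M∨, η, ε) and the right-hand trace is taken in D with respect to the dual pair (F(M), F(M∨)) whose coevaluation is c_{M,M∨}⁻¹ ∘ F(η) ∘ i and whose evaluation is i⁻¹ ∘ F(ε) ∘ c_{M∨,M}. -/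
open CategoryTheory Category MonoidalCategory

universe v u v' u'

/-- A lax symmetric monoidal functor between symmetric monoidal categories: a functor `F`
together with structure morphisms `i : 𝟙_ D ⟶ F (𝟙_ C)` and
`c X Y : F X ⊗ F Y ⟶ F (X ⊗ Y)` (natural in `X` and `Y`), satisfying the associativity,
unit, and symmetry coherence axioms.  `F` is called normal when `i` is invertible. -/
structure LaxSymMonFunctor (C : Type u) (D : Type u') [Category.{v} C] [Category.{v'} D]
    [MonoidalCategory C] [MonoidalCategory D] [SymmetricCategory C] [SymmetricCategory D]
    extends C ⥤ D where
  i : 𝟙_ D ⟶ obj (𝟙_ C)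
  c : ∀ X Y : C, obj X ⊗ obj Y ⟶ obj (X ⊗ Y)
  c_natural : ∀ {X X' Y Y' : C} (f : X ⟶ X') (g : Y ⟶ Y'),
    (map f ⊗ₘ map g) ≫ c X' Y' = c X Y ≫ map (f ⊗ₘ g)
  associativity : ∀ X Y Z : C,
    (c X Y ▷ obj Z) ≫ c (X ⊗ Y) Z ≫ map (α_ X Y Z).hom =
      (α_ (obj X) (obj Y) (obj Z)).hom ≫ (obj X ◁ c Y Z) ≫ c X (Y ⊗ Z)
  left_unitality : ∀ X : C,
    (λ_ (obj X)).hom = (i ▷ obj X) ≫ c (𝟙_ C) X ≫ map (λ_ X).hom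
  right_unitality : ∀ X : C,
    (ρ_ (obj X)).hom = (obj X ◁ i) ≫ c X (𝟙_ C) ≫ map (ρ_ X).hom
  symmetry : ∀ X Y : C,
    (β_ (obj X) (obj Y)).hom ≫ c Y X = c X Y ≫ map (β_ X Y).hom

/-- The induced duality data on `(F M, F M∨)` for a normal lax symmetric monoidal functor `F`
with `c_{M,M∨}` invertible: the coevaluation is `c_{M,M∨}⁻¹ ∘ F(η) ∘ i` and the evaluation is
`i⁻¹ ∘ F(ε) ∘ c_{M∨,M}`. -/
noncomputable abbrev LaxSymMonFunctor.inducedData {C : Type u} {D : Type u'} [Category.{v} C]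
    [Category.{v'} D] [MonoidalCategory C] [MonoidalCategory D] [SymmetricCategory C]
    [SymmetricCategory D] (F : LaxSymMonFunctor C D) (Dp : MonDualData C)
    [IsIso F.i] [IsIso (F.c Dp.M Dp.Mv)] : MonDualData D where
  M := F.obj Dp.M
  Mv := F.obj Dp.Mv
  η := F.i ≫ F.map Dp.η ≫ inv (F.c Dp.M Dp.Mv)
  ε := F.c Dp.Mv Dp.M ≫ F.map Dp.ε ≫ inv F.i

/-- Functoriality of the symmetric monoidal trace: for a normal lax symmetric monoidal
functor `F`, a dual pair `(M, M∨, η, ε)` with `c_{M,M∨}` invertible, and a morphism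
`f : Q ⊗ M ⟶ M ⊗ P` with `c_{M,P}` invertible,
`F(tr f) = tr(c_{M,P}⁻¹ ∘ F(f) ∘ c_{Q,M})`, the right-hand trace being taken with respect
to the induced dual pair `(F M, F M∨)`. -/
theorem laxSymMonFunctor_preserves_trace {C : Type u} {D : Type u'} [Category.{v} C]
    [Category.{v'} D] [MonoidalCategory C] [MonoidalCategory D] [SymmetricCategory C]
    [SymmetricCategory D] (F : LaxSymMonFunctor C D) [IsIso F.i]
    (Dp : MonDualData C) (hDp : Dp.IsDualPair) [IsIso (F.c Dp.M Dp.Mv)]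
    {Q P : C} (f : Q ⊗ Dp.M ⟶ Dp.M ⊗ P) [IsIso (F.c Dp.M P)] :
    F.map (mtrace Dp f)
      = mtrace (F.inducedData Dp) (F.c Q Dp.M ≫ F.map f ≫ inv (F.c Dp.M P)) := by

  have hQ : (ρ_ (F.obj Q)).inv ≫ (F.obj Q ◁ F.i) ≫ F.c Q (𝟙_ C) = F.map (ρ_ Q).inv := by
    rw [Iso.inv_comp_eq, F.right_unitality Q, assoc, assoc, ← F.map_comp,
      Iso.hom_inv_id, F.map_id, comp_id]
  have h2 : F.c Q (𝟙_ C) ≫ F.map (Q ◁ Dp.η)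
      = (F.obj Q ◁ F.map Dp.η) ≫ F.c Q (Dp.M ⊗ Dp.Mv) := by
    have := F.c_natural (𝟙 Q) Dp.η
    simp only [F.map_id, id_tensorHom] at this
    rw [← this]
  have h3 : F.c Q (Dp.M ⊗ Dp.Mv) ≫ F.map (α_ Q Dp.M Dp.Mv).inv
      = (F.obj Q ◁ inv (F.c Dp.M Dp.Mv)) ≫ (α_ (F.obj Q) (F.obj Dp.M) (F.obj Dp.Mv)).inv ≫
        (F.c Q Dp.M ▷ F.obj Dp.Mv) ≫ F.c (Q ⊗ Dp.M) Dp.Mv := by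
    have h := F.associativity Q Dp.M Dp.Mv
    rw [← cancel_epi (F.obj Q ◁ F.c Dp.M Dp.Mv), ← MonoidalCategory.whiskerLeft_comp_assoc,
      IsIso.hom_inv_id, MonoidalCategory.whiskerLeft_id, id_comp, ← cancel_epi
        (α_ (F.obj Q) (F.obj Dp.M) (F.obj Dp.Mv)).hom, Iso.hom_inv_id_assoc,
      ← reassoc_of% h, ← F.map_comp, Iso.hom_inv_id, F.map_id, comp_id]
  have h4 : F.c (Q ⊗ Dp.M) Dp.Mv ≫ F.map (f ▷ Dp.Mv)
      = (F.map f ▷ F.obj Dp.Mv) ≫ F.c (Dp.M ⊗ P) Dp.Mv := by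
    have := F.c_natural f (𝟙 Dp.Mv)
    simp only [F.map_id, tensorHom_id] at this
    rw [← this]
  have h5 : F.c (Dp.M ⊗ P) Dp.Mv ≫ F.map (β_ (Dp.M ⊗ P) Dp.Mv).hom
      = (inv (F.c Dp.M P) ▷ F.obj Dp.Mv) ≫
        (β_ (F.obj Dp.M ⊗ F.obj P) (F.obj Dp.Mv)).hom ≫
        (F.obj Dp.Mv ◁ F.c Dp.M P) ≫ F.c Dp.Mv (Dp.M ⊗ P) := by
    have h := F.symmetry (Dp.M ⊗ P) Dp.Mv
    have hn := BraidedCategory.braiding_naturality_left (F.c Dp.M P) (F.obj Dp.Mv)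
    rw [← cancel_epi (F.c Dp.M P ▷ F.obj Dp.Mv), ← comp_whiskerRight_assoc,
      IsIso.hom_inv_id, id_whiskerRight, id_comp, ← h, reassoc_of% hn]
  have h6 : F.c Dp.Mv (Dp.M ⊗ P) ≫ F.map (α_ Dp.Mv Dp.M P).inv
      = (F.obj Dp.Mv ◁ inv (F.c Dp.M P)) ≫ (α_ (F.obj Dp.Mv) (F.obj Dp.M) (F.obj P)).inv ≫
        (F.c Dp.Mv Dp.M ▷ F.obj P) ≫ F.c (Dp.Mv ⊗ Dp.M) P := by
    have h := F.associativity Dp.Mv Dp.M P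
    rw [← cancel_epi (F.obj Dp.Mv ◁ F.c Dp.M P), ← MonoidalCategory.whiskerLeft_comp_assoc,
      IsIso.hom_inv_id, MonoidalCategory.whiskerLeft_id, id_comp, ← cancel_epi
        (α_ (F.obj Dp.Mv) (F.obj Dp.M) (F.obj P)).hom, Iso.hom_inv_id_assoc,
      ← reassoc_of% h, ← F.map_comp, Iso.hom_inv_id, F.map_id, comp_id]
  have h7 : F.c (Dp.Mv ⊗ Dp.M) P ≫ F.map (Dp.ε ▷ P)
      = (F.map Dp.ε ▷ F.obj P) ≫ F.c (𝟙_ C) P := by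
    have := F.c_natural Dp.ε (𝟙 P)
    simp only [F.map_id, tensorHom_id] at this
    rw [← this]
  have h8 : F.c (𝟙_ C) P ≫ F.map (λ_ P).hom
      = (inv F.i ▷ F.obj P) ≫ (λ_ (F.obj P)).hom := by
    rw [F.left_unitality P, ← comp_whiskerRight_assoc, IsIso.inv_hom_id,
      id_whiskerRight, id_comp]
  simp only [mtrace, Functor.map_comp, assoc]
  rw [← hQ, assoc, assoc, reassoc_of% h2, reassoc_of% h3, reassoc_of% h4,
    reassoc_of% h5, reassoc_of% h6, reassoc_of% h7, h8]
  have hcancel : F.obj Dp.Mv ◁ F.c Dp.M P ≫ F.obj Dp.Mv ◁ inv (F.c Dp.M P) = 𝟙 _ := by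
    rw [← MonoidalCategory.whiskerLeft_comp, IsIso.hom_inv_id,
      MonoidalCategory.whiskerLeft_id]
  simp only [LaxSymMonFunctor.inducedData, MonoidalCategory.whiskerLeft_comp,
    comp_whiskerRight, assoc, reassoc_of% hcancel]
end

section
/- Duals invert monoidal natural transformations: Let F, G : C → D be normal lax symmetric monoidal functors, let α : F → G be a monoidal natural transformation, and let (M, M∨, η, ε) be a dual pair in C such that c^F_{M,M∨} and c^G_{M,M∨} are invertible. Then α_M : F(M) → G(M) is an isomorphism, whose inverse is the mate of α_{M∨}: the composite G(M) ≅ I_D ⊗ G(M) → (F(M) ⊗ F(M∨)) ⊗ G(M) → (F(M) ⊗ G(M∨)) ⊗ G(M) ≅ F(M) ⊗ (G(M∨) ⊗ G(M)) → F(M) ⊗ I_D ≅ F(M), where the second arrow uses the coevaluation of the induced dual pair (F(M), F(M∨)), the third is (id ⊗ α_{M∨}) ⊗ id, and the fifth uses the evaluation of the induced dual pair (G(M), G(M∨)). -/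
open CategoryTheory Category MonoidalCategory

universe v u v' u'

/-- A monoidal natural transformation between lax symmetric monoidal functors:
a natural transformation compatible with the structure morphisms `c` and `i`. -/
structure MonNatTrans {C : Type u} {D : Type u'} [Category.{v} C] [Category.{v'} D]
    [MonoidalCategory C] [MonoidalCategory D] [SymmetricCategory C] [SymmetricCategory D]
    (F G : LaxSymMonFunctor C D) where
  app : ∀ X : C, F.obj X ⟶ G.obj X
  naturality : ∀ {X Y : C} (f : X ⟶ Y), F.map f ≫ app Y = app X ≫ G.map f
  unit : F.i ≫ app (𝟙_ C) = G.i
  tensor : ∀ X Y : C, F.c X Y ≫ app (X ⊗ Y) = (app X ⊗ₘ app Y) ≫ G.c X Y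

/-- The mate of `α_{M∨}`: the composite
`G(M) ≅ I ⊗ G(M) ⟶ (F(M) ⊗ F(M∨)) ⊗ G(M) ⟶ (F(M) ⊗ G(M∨)) ⊗ G(M) ≅ F(M) ⊗ (G(M∨) ⊗ G(M))
⟶ F(M) ⊗ I ≅ F(M)`, using the coevaluation of the induced dual pair `(F M, F M∨)`,
the component `α_{M∨}`, and the evaluation of the induced dual pair `(G M, G M∨)`. -/
noncomputable def MonNatTrans.dualMate {C : Type u} {D : Type u'} [Category.{v} C]
    [Category.{v'} D] [MonoidalCategory C] [MonoidalCategory D] [SymmetricCategory C]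
    [SymmetricCategory D] {F G : LaxSymMonFunctor C D} (τ : MonNatTrans F G)
    (Dp : MonDualData C) [IsIso F.i] [IsIso G.i]
    [IsIso (F.c Dp.M Dp.Mv)] [IsIso (G.c Dp.M Dp.Mv)] :
    G.obj Dp.M ⟶ F.obj Dp.M :=
  (λ_ (G.obj Dp.M)).inv ≫ ((F.inducedData Dp).η ▷ G.obj Dp.M) ≫
    ((F.obj Dp.M ◁ τ.app Dp.Mv) ▷ G.obj Dp.M) ≫
    (α_ (F.obj Dp.M) (G.obj Dp.Mv) (G.obj Dp.M)).hom ≫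
    (F.obj Dp.M ◁ (G.inducedData Dp).ε) ≫ (ρ_ (F.obj Dp.M)).hom


section Aux

-- abstract lemma
theorem aux_mate {D : Type u'} [Category.{v'} D] [MonoidalCategory D]
    {A B A' B' : D} (η : 𝟙_ D ⟶ A ⊗ B) (ε : B ⊗ A ⟶ 𝟙_ D)
    (η' : 𝟙_ D ⟶ A' ⊗ B') (ε' : B' ⊗ A' ⟶ 𝟙_ D)
    (f : A ⟶ A') (g : B ⟶ B')
    (t1 : (λ_ A).inv ≫ (η ▷ A) ≫ (α_ A B A).hom ≫ (A ◁ ε) ≫ (ρ_ A).hom = 𝟙 A)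
    (t1' : (λ_ A').inv ≫ (η' ▷ A') ≫ (α_ A' B' A').hom ≫ (A' ◁ ε') ≫ (ρ_ A').hom = 𝟙 A')
    (hη : η ≫ (f ⊗ₘ g) = η') (hε : (g ⊗ₘ f) ≫ ε' = ε) :
    f ≫ ((λ_ A').inv ≫ (η ▷ A') ≫ ((A ◁ g) ▷ A') ≫ (α_ A B' A').hom ≫ (A ◁ ε') ≫ (ρ_ A).hom)
      = 𝟙 A ∧
    ((λ_ A').inv ≫ (η ▷ A') ≫ ((A ◁ g) ▷ A') ≫ (α_ A B' A').hom ≫ (A ◁ ε') ≫ (ρ_ A).hom) ≫ f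
      = 𝟙 A' := by
  constructor
  · calc f ≫ (λ_ A').inv ≫ (η ▷ A') ≫ ((A ◁ g) ▷ A') ≫ (α_ A B' A').hom ≫ (A ◁ ε') ≫ (ρ_ A).hom
        = (λ_ A).inv ≫ (𝟙_ D ◁ f) ≫ (η ▷ A') ≫ ((A ◁ g) ▷ A') ≫ (α_ A B' A').hom ≫
            (A ◁ ε') ≫ (ρ_ A).hom := by
          rw [← leftUnitor_inv_naturality_assoc]
      _ = (λ_ A).inv ≫ (η ▷ A) ≫ ((A ⊗ B) ◁ f) ≫ ((A ◁ g) ▷ A') ≫ (α_ A B' A').hom ≫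
            (A ◁ ε') ≫ (ρ_ A).hom := by rw [← whisker_exchange_assoc]
      _ = (λ_ A).inv ≫ (η ▷ A) ≫ ((A ◁ g) ▷ A) ≫ ((A ⊗ B') ◁ f) ≫ (α_ A B' A').hom ≫
            (A ◁ ε') ≫ (ρ_ A).hom := by rw [whisker_exchange_assoc]
      _ = (λ_ A).inv ≫ (η ▷ A) ≫ ((A ◁ g) ▷ A) ≫ (α_ A B' A).hom ≫ (A ◁ (B' ◁ f)) ≫
            (A ◁ ε') ≫ (ρ_ A).hom := by rw [associator_naturality_right_assoc]
      _ = (λ_ A).inv ≫ (η ▷ A) ≫ (α_ A B A).hom ≫ (A ◁ (g ▷ A)) ≫ (A ◁ (B' ◁ f)) ≫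
            (A ◁ ε') ≫ (ρ_ A).hom := by rw [associator_naturality_middle_assoc]
      _ = (λ_ A).inv ≫ (η ▷ A) ≫ (α_ A B A).hom ≫ (A ◁ ((g ▷ A) ≫ (B' ◁ f) ≫ ε')) ≫
            (ρ_ A).hom := by simp only [MonoidalCategory.whiskerLeft_comp, assoc]
      _ = 𝟙 A := by rw [← tensorHom_def_assoc, hε, t1]
  · calc ((λ_ A').inv ≫ (η ▷ A') ≫ ((A ◁ g) ▷ A') ≫ (α_ A B' A').hom ≫ (A ◁ ε') ≫ (ρ_ A).hom) ≫ f
        = (λ_ A').inv ≫ (η ▷ A') ≫ ((A ◁ g) ▷ A') ≫ (α_ A B' A').hom ≫ (A ◁ ε') ≫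
            (f ▷ 𝟙_ D) ≫ (ρ_ A').hom := by rw [rightUnitor_naturality]; simp [assoc]
      _ = (λ_ A').inv ≫ (η ▷ A') ≫ ((A ◁ g) ▷ A') ≫ (α_ A B' A').hom ≫
            (f ▷ (B' ⊗ A')) ≫ (A' ◁ ε') ≫ (ρ_ A').hom := by rw [← whisker_exchange_assoc]
      _ = (λ_ A').inv ≫ (η ▷ A') ≫ ((A ◁ g) ▷ A') ≫ ((f ▷ B') ▷ A') ≫ (α_ A' B' A').hom ≫
            (A' ◁ ε') ≫ (ρ_ A').hom := by rw [associator_naturality_left_assoc]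
      _ = (λ_ A').inv ≫ (η ▷ A') ≫ ((f ⊗ₘ g) ▷ A') ≫ (α_ A' B' A').hom ≫
            (A' ◁ ε') ≫ (ρ_ A').hom := by
          slice_lhs 3 4 => rw [← comp_whiskerRight, ← tensorHom_def']
          simp only [assoc]
      _ = (λ_ A').inv ≫ (η' ▷ A') ≫ (α_ A' B' A').hom ≫ (A' ◁ ε') ≫ (ρ_ A').hom := by
          rw [← comp_whiskerRight_assoc, hη]
      _ = 𝟙 A' := t1'

theorem induced_t1 {C : Type u} {D : Type u'} [Category.{v} C]
    [Category.{v'} D] [MonoidalCategory C] [MonoidalCategory D] [SymmetricCategory C]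
    [SymmetricCategory D] (F : LaxSymMonFunctor C D) (Dp : MonDualData C)
    (hDp : Dp.IsDualPair) [IsIso F.i] [IsIso (F.c Dp.M Dp.Mv)] :
    (λ_ (F.obj Dp.M)).inv ≫ ((F.inducedData Dp).η ▷ F.obj Dp.M) ≫
      (α_ (F.obj Dp.M) (F.obj Dp.Mv) (F.obj Dp.M)).hom ≫
      (F.obj Dp.M ◁ (F.inducedData Dp).ε) ≫ (ρ_ (F.obj Dp.M)).hom = 𝟙 (F.obj Dp.M) := by
  obtain ⟨M, Mv, η, ε⟩ := Dp
  obtain ⟨t1, -⟩ := hDp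
  dsimp only [LaxSymMonFunctor.inducedData] at *
  have hc1 : (F.map (𝟙 M) ⊗ₘ F.map ε) ≫ F.c M (𝟙_ C) = F.c M (Mv ⊗ M) ≫ F.map (𝟙 M ⊗ₘ ε) :=
    F.c_natural (𝟙 M) ε
  rw [F.map_id, id_tensorHom, id_tensorHom] at hc1
  have hc2 : (F.map η ⊗ₘ F.map (𝟙 M)) ≫ F.c (M ⊗ Mv) M = F.c (𝟙_ C) M ≫ F.map (η ⊗ₘ 𝟙 M) :=
    F.c_natural η (𝟙 M)
  rw [F.map_id, tensorHom_id, tensorHom_id] at hc2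
  have hlu : (λ_ (F.obj M)).inv ≫ (F.i ▷ F.obj M) ≫ F.c (𝟙_ C) M = F.map (λ_ M).inv := by
    rw [Iso.inv_comp_eq, F.left_unitality M]
    simp [← F.map_comp]
  have hru : (F.obj M ◁ inv F.i) ≫ (ρ_ (F.obj M)).hom = F.c M (𝟙_ C) ≫ F.map (ρ_ M).hom := by
    rw [F.right_unitality M, ← assoc, ← MonoidalCategory.whiskerLeft_comp, IsIso.inv_hom_id,
      MonoidalCategory.whiskerLeft_id, id_comp]
  have hassoc : (inv (F.c M Mv) ▷ F.obj M) ≫ (α_ (F.obj M) (F.obj Mv) (F.obj M)).hom ≫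
      (F.obj M ◁ F.c Mv M) ≫ F.c M (Mv ⊗ M) = F.c (M ⊗ Mv) M ≫ F.map (α_ M Mv M).hom := by
    rw [← F.associativity M Mv M, ← comp_whiskerRight_assoc, IsIso.inv_hom_id,
      id_whiskerRight, id_comp]
  calc (λ_ (F.obj M)).inv ≫ ((F.i ≫ F.map η ≫ inv (F.c M Mv)) ▷ F.obj M) ≫
        (α_ (F.obj M) (F.obj Mv) (F.obj M)).hom ≫
        (F.obj M ◁ (F.c Mv M ≫ F.map ε ≫ inv F.i)) ≫ (ρ_ (F.obj M)).hom
      = (λ_ (F.obj M)).inv ≫ (F.i ▷ F.obj M) ≫ (F.map η ▷ F.obj M) ≫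
          (inv (F.c M Mv) ▷ F.obj M) ≫ (α_ (F.obj M) (F.obj Mv) (F.obj M)).hom ≫
          (F.obj M ◁ F.c Mv M) ≫ (F.obj M ◁ F.map ε) ≫ (F.obj M ◁ inv F.i) ≫
          (ρ_ (F.obj M)).hom := by
        simp only [comp_whiskerRight, MonoidalCategory.whiskerLeft_comp, assoc]
    _ = (λ_ (F.obj M)).inv ≫ (F.i ▷ F.obj M) ≫ (F.map η ▷ F.obj M) ≫
          (inv (F.c M Mv) ▷ F.obj M) ≫ (α_ (F.obj M) (F.obj Mv) (F.obj M)).hom ≫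
          (F.obj M ◁ F.c Mv M) ≫ (F.obj M ◁ F.map ε) ≫ F.c M (𝟙_ C) ≫
          F.map (ρ_ M).hom := by rw [hru]
    _ = (λ_ (F.obj M)).inv ≫ (F.i ▷ F.obj M) ≫ (F.map η ▷ F.obj M) ≫
          (inv (F.c M Mv) ▷ F.obj M) ≫ (α_ (F.obj M) (F.obj Mv) (F.obj M)).hom ≫
          (F.obj M ◁ F.c Mv M) ≫ F.c M (Mv ⊗ M) ≫ F.map (M ◁ ε) ≫
          F.map (ρ_ M).hom := by rw [reassoc_of% hc1]
    _ = (λ_ (F.obj M)).inv ≫ (F.i ▷ F.obj M) ≫ (F.map η ▷ F.obj M) ≫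
          F.c (M ⊗ Mv) M ≫ F.map (α_ M Mv M).hom ≫ F.map (M ◁ ε) ≫
          F.map (ρ_ M).hom := by rw [reassoc_of% hassoc]
    _ = (λ_ (F.obj M)).inv ≫ (F.i ▷ F.obj M) ≫ F.c (𝟙_ C) M ≫ F.map (η ▷ M) ≫
          F.map (α_ M Mv M).hom ≫ F.map (M ◁ ε) ≫ F.map (ρ_ M).hom := by
        rw [reassoc_of% hc2]
    _ = F.map (λ_ M).inv ≫ F.map (η ▷ M) ≫ F.map (α_ M Mv M).hom ≫ F.map (M ◁ ε) ≫
          F.map (ρ_ M).hom := by rw [reassoc_of% hlu]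
    _ = 𝟙 (F.obj M) := by
        simp only [← F.map_comp]
        rw [← assoc, ← assoc, ← assoc] at t1
        simp only [assoc] at t1 ⊢
        rw [t1, F.map_id]

end Aux

/-- "Duals invert": for a monoidal natural transformation `α : F ⟶ G` between normal lax
symmetric monoidal functors and a dual pair `(M, M∨, η, ε)` with `c^F_{M,M∨}` and
`c^G_{M,M∨}` invertible, the component `α_M : F(M) ⟶ G(M)` is an isomorphism whose inverse
is the mate of `α_{M∨}`. -/
theorem monNatTrans_duals_invert {C : Type u} {D : Type u'} [Category.{v} C]
    [Category.{v'} D] [MonoidalCategory C] [MonoidalCategory D] [SymmetricCategory C]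
    [SymmetricCategory D] (F G : LaxSymMonFunctor C D) [IsIso F.i] [IsIso G.i]
    (τ : MonNatTrans F G) (Dp : MonDualData C) (hDp : Dp.IsDualPair)
    [IsIso (F.c Dp.M Dp.Mv)] [IsIso (G.c Dp.M Dp.Mv)] :
    τ.app Dp.M ≫ τ.dualMate Dp = 𝟙 (F.obj Dp.M) ∧
      τ.dualMate Dp ≫ τ.app Dp.M = 𝟙 (G.obj Dp.M) := by
  have hη : (F.inducedData Dp).η ≫ (τ.app Dp.M ⊗ₘ τ.app Dp.Mv) = (G.inducedData Dp).η := by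
    dsimp only [LaxSymMonFunctor.inducedData]
    have h : inv (F.c Dp.M Dp.Mv) ≫ (τ.app Dp.M ⊗ₘ τ.app Dp.Mv) =
        τ.app (Dp.M ⊗ Dp.Mv) ≫ inv (G.c Dp.M Dp.Mv) := by
      rw [IsIso.inv_comp_eq, ← assoc, τ.tensor, assoc, IsIso.hom_inv_id, comp_id]
    rw [assoc, assoc, h, ← assoc, ← assoc, assoc (F.i), τ.naturality Dp.η, ← assoc,
      τ.unit, assoc]
  have hε : (τ.app Dp.Mv ⊗ₘ τ.app Dp.M) ≫ (G.inducedData Dp).ε = (F.inducedData Dp).ε := by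
    dsimp only [LaxSymMonFunctor.inducedData]
    have hu : τ.app (𝟙_ C) ≫ inv G.i = inv F.i := by
      rw [IsIso.comp_inv_eq, ← τ.unit, IsIso.inv_hom_id_assoc]
    rw [← assoc, ← τ.tensor, assoc]
    slice_lhs 2 3 => rw [← τ.naturality]
    simp only [assoc]
    rw [hu]
  exact aux_mate (F.inducedData Dp).η (F.inducedData Dp).ε (G.inducedData Dp).η
    (G.inducedData Dp).ε (τ.app Dp.M) (τ.app Dp.Mv)
    (induced_t1 F Dp hDp) (induced_t1 G Dp hDp) hη hε
end

section
/- 2-functoriality of the symmetric monoidal trace: Let F, G : C → D be normal lax symmetric monoidal functors, α : F → G a monoidal natural transformation, (M, M∨, η, ε) a dual pair in C with c^F_{M,M∨} and c^G_{M,M∨} invertible, and f : Q ⊗ M → M ⊗ P a morphism with c^F_{M,P} and c^G_{M,P} invertible. Then α_P ∘ tr((c^F_{M,P})⁻¹ ∘ F(f) ∘ c^F_{Q,M}) = tr((c^G_{M,P})⁻¹ ∘ G(f) ∘ c^G_{Q,M}) ∘ α_Q as morphisms F(Q) → G(P), where the first trace is taken with respect to the induced dual pair (F(M), F(M∨)) and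 the second with respect to the induced dual pair (G(M), G(M∨)). -/
open CategoryTheory Category MonoidalCategory

universe v u v' u'

section TracePres

variable {C : Type u} {D : Type u'} [Category.{v} C] [Category.{v'} D]
  [MonoidalCategory C] [MonoidalCategory D] [SymmetricCategory C] [SymmetricCategory D]

/-- A normal lax symmetric monoidal functor with the relevant structure maps invertible
preserves traces. -/
theorem laxSymMon_trace_pres (F : LaxSymMonFunctor C D) [IsIso F.i]
    (Dp : MonDualData C) [IsIso (F.c Dp.M Dp.Mv)]
    {Q P : C} (f : Q ⊗ Dp.M ⟶ Dp.M ⊗ P) [IsIso (F.c Dp.M P)] :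
    mtrace (F.inducedData Dp) (F.c Q Dp.M ≫ F.map f ≫ inv (F.c Dp.M P))
      = F.map (mtrace Dp f) := by
  obtain ⟨M, V, η, ε⟩ := Dp
  dsimp [mtrace, LaxSymMonFunctor.inducedData] at *
  simp only [MonoidalCategory.whiskerLeft_comp, comp_whiskerRight, Functor.map_comp, assoc]
  have e1 : (F.obj Q ◁ F.i) ≫ F.c Q (𝟙_ C) = (ρ_ (F.obj Q)).hom ≫ F.map (ρ_ Q).inv := by
    rw [F.right_unitality Q]; simp [← Functor.map_comp]
  have e2 : (F.obj Q ◁ F.map η) ≫ F.c Q (M ⊗ V) = F.c Q (𝟙_ C) ≫ F.map (Q ◁ η) := by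
    simpa using F.c_natural (𝟙 Q) η
  have e3 : (α_ (F.obj Q) (F.obj M) (F.obj V)).inv ≫ (F.c Q M ▷ F.obj V) ≫ F.c (Q ⊗ M) V
      = (F.obj Q ◁ F.c M V) ≫ F.c Q (M ⊗ V) ≫ F.map (α_ Q M V).inv := by
    have h := F.associativity Q M V
    rw [← cancel_mono (F.map (α_ Q M V).hom)]
    simp only [assoc, ← Functor.map_comp, Iso.inv_hom_id, Functor.map_id, comp_id]
    rw [h]; simp
  have e4 : (F.map f ▷ F.obj V) ≫ F.c (M ⊗ P) V = F.c (Q ⊗ M) V ≫ F.map (f ▷ V) := by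
    simpa using F.c_natural f (𝟙 V)
  have e5 : (β_ (F.obj (M ⊗ P)) (F.obj V)).hom ≫ F.c V (M ⊗ P)
      = F.c (M ⊗ P) V ≫ F.map (β_ (M ⊗ P) V).hom := F.symmetry (M ⊗ P) V
  have ebr : (F.c M P ▷ F.obj V) ≫ (β_ (F.obj (M ⊗ P)) (F.obj V)).hom
      = (β_ (F.obj M ⊗ F.obj P) (F.obj V)).hom ≫ (F.obj V ◁ F.c M P) :=
    BraidedCategory.braiding_naturality_left (F.c M P) (F.obj V)
  have e6 : (α_ (F.obj V) (F.obj M) (F.obj P)).inv ≫ (F.c V M ▷ F.obj P) ≫ F.c (V ⊗ M) P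
      = (F.obj V ◁ F.c M P) ≫ F.c V (M ⊗ P) ≫ F.map (α_ V M P).inv := by
    have h := F.associativity V M P
    rw [← cancel_mono (F.map (α_ V M P).hom)]
    simp only [assoc, ← Functor.map_comp, Iso.inv_hom_id, Functor.map_id, comp_id]
    rw [h]; simp
  have e7 : (F.map ε ▷ F.obj P) ≫ F.c (𝟙_ C) P = F.c (V ⊗ M) P ≫ F.map (ε ▷ P) := by
    simpa using F.c_natural ε (𝟙 P)
  have e8 : (CategoryTheory.inv F.i ▷ F.obj P) ≫ (λ_ (F.obj P)).hom
      = F.c (𝟙_ C) P ≫ F.map (λ_ P).hom := by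
    rw [F.left_unitality P]
    simp [← comp_whiskerRight_assoc, ← comp_whiskerRight]
  slice_lhs 13 14 => rw [e8]
  slice_lhs 12 13 => rw [e7]
  slice_lhs 10 12 => rw [e6]
  simp only [assoc]
  slice_lhs 9 10 => rw [← ebr]
  slice_lhs 8 9 =>
    rw [← comp_whiskerRight, IsIso.inv_hom_id, MonoidalCategory.id_whiskerRight]
  simp only [assoc, id_comp]
  slice_lhs 8 9 => rw [e5]
  slice_lhs 7 8 => rw [e4]
  slice_lhs 5 7 => rw [e3]
  simp only [assoc]
  slice_lhs 4 5 =>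
    rw [← MonoidalCategory.whiskerLeft_comp, IsIso.inv_hom_id, MonoidalCategory.whiskerLeft_id]
  simp only [assoc, id_comp]
  slice_lhs 3 4 => rw [e2]
  slice_lhs 2 3 => rw [e1]
  simp

end TracePres

/-- 2-functoriality of the symmetric monoidal trace: for a monoidal natural transformation
`α : F ⟶ G` between normal lax symmetric monoidal functors, a dual pair `(M, M∨, η, ε)`
with `c^F_{M,M∨}`, `c^G_{M,M∨}` invertible, and `f : Q ⊗ M ⟶ M ⊗ P` with `c^F_{M,P}`,
`c^G_{M,P}` invertible, the square
`α_P ∘ tr((c^F_{M,P})⁻¹ ∘ F(f) ∘ c^F_{Q,M}) = tr((c^G_{M,P})⁻¹ ∘ G(f) ∘ c^G_{Q,M}) ∘ α_Q`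
commutes, the traces being taken with respect to the induced dual pairs. -/
theorem monNatTrans_trace_square {C : Type u} {D : Type u'} [Category.{v} C]
    [Category.{v'} D] [MonoidalCategory C] [MonoidalCategory D] [SymmetricCategory C]
    [SymmetricCategory D] (F G : LaxSymMonFunctor C D) [IsIso F.i] [IsIso G.i]
    (τ : MonNatTrans F G) (Dp : MonDualData C) (hDp : Dp.IsDualPair)
    [IsIso (F.c Dp.M Dp.Mv)] [IsIso (G.c Dp.M Dp.Mv)]
    {Q P : C} (f : Q ⊗ Dp.M ⟶ Dp.M ⊗ P) [IsIso (F.c Dp.M P)] [IsIso (G.c Dp.M P)] :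
    mtrace (F.inducedData Dp) (F.c Q Dp.M ≫ F.map f ≫ inv (F.c Dp.M P)) ≫ τ.app P
      = τ.app Q ≫ mtrace (G.inducedData Dp) (G.c Q Dp.M ≫ G.map f ≫ inv (G.c Dp.M P)) := by
  rw [laxSymMon_trace_pres, laxSymMon_trace_pres, τ.naturality]
end

section
/- Let F, G : C → D be normal lax symmetric monoidal functors, α : F → G a monoidal natural transformation, and (M, M∨, η, ε) a dual pair in C with c^F_{M,M∨} and c^G_{M,M∨} invertible. Then for any endomorphism f : M → M, tr(F(f)) = tr(G(f)) as morphisms I_D → I_D, where F(f) is regarded as a morphism I_D ⊗ F(M) → F(M) ⊗ I_D via the unitors and its trace is taken with respect to the induced dual pair (F(M), F(M∨)), and similarly tr(G(f)) with respect to (G(M), G(M∨)). -/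
open CategoryTheory Category MonoidalCategory

universe v u v' u'

private lemma mtrace_unit_aux {E : Type*} [Category E] [MonoidalCategory E]
    [SymmetricCategory E] (Dd : MonDualData E) (g : Dd.M ⟶ Dd.M) :
    mtrace Dd ((λ_ Dd.M).hom ≫ g ≫ (ρ_ Dd.M).inv)
      = Dd.η ≫ (g ▷ Dd.Mv) ≫ (β_ Dd.M Dd.Mv).hom ≫ Dd.ε := by
  unfold mtrace
  simp only [comp_whiskerRight, assoc]
  rw [reassoc_of% (BraidedCategory.braiding_naturality_left (ρ_ Dd.M).inv Dd.Mv)]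
  monoidal

private lemma trace_conj {C : Type u} {D : Type u'} [Category.{v} C]
    [Category.{v'} D] [MonoidalCategory C] [MonoidalCategory D] [SymmetricCategory C]
    [SymmetricCategory D] (F : LaxSymMonFunctor C D) [IsIso F.i]
    (Dp : MonDualData C) [IsIso (F.c Dp.M Dp.Mv)] (f : Dp.M ⟶ Dp.M) :
    mtrace (F.inducedData Dp) ((λ_ (F.obj Dp.M)).hom ≫ F.map f ≫ (ρ_ (F.obj Dp.M)).inv)
      = F.i ≫ F.map (Dp.η ≫ (f ▷ Dp.Mv) ≫ (β_ Dp.M Dp.Mv).hom ≫ Dp.ε) ≫ inv F.i := by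
  rw [mtrace_unit_aux]
  show (F.i ≫ F.map Dp.η ≫ inv (F.c Dp.M Dp.Mv)) ≫ (F.map f ▷ F.obj Dp.Mv) ≫
      (β_ (F.obj Dp.M) (F.obj Dp.Mv)).hom ≫ (F.c Dp.Mv Dp.M ≫ F.map Dp.ε ≫ inv F.i) = _
  have h1 : (F.map f ▷ F.obj Dp.Mv) ≫ F.c Dp.M Dp.Mv
      = F.c Dp.M Dp.Mv ≫ F.map (f ▷ Dp.Mv) := by
    have := F.c_natural f (𝟙 Dp.Mv)
    simpa using this
  have h2 := F.symmetry Dp.M Dp.Mv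
  simp only [assoc]
  rw [reassoc_of% h2, reassoc_of% h1]
  simp only [Functor.map_comp, assoc, IsIso.hom_inv_id_assoc, IsIso.hom_inv_id]
  rw [← Functor.map_comp_assoc, ← Functor.map_comp_assoc,
    BraidedCategory.braiding_naturality_left]
  simp

/-- For a monoidal natural transformation `α : F ⟶ G` between normal lax symmetric monoidal
functors and a dual pair `(M, M∨, η, ε)` with `c^F_{M,M∨}` and `c^G_{M,M∨}` invertible,
for any endomorphism `f : M ⟶ M` one has `tr(F f) = tr(G f) : 𝟙_ D ⟶ 𝟙_ D`, where `F f`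
is regarded as a morphism `𝟙_ D ⊗ F M ⟶ F M ⊗ 𝟙_ D` via the unitors and traced with
respect to the induced dual pair `(F M, F M∨)`, and similarly for `G f`. -/
theorem monNatTrans_trace_eq {C : Type u} {D : Type u'} [Category.{v} C]
    [Category.{v'} D] [MonoidalCategory C] [MonoidalCategory D] [SymmetricCategory C]
    [SymmetricCategory D] (F G : LaxSymMonFunctor C D) [IsIso F.i] [IsIso G.i]
    (τ : MonNatTrans F G) (Dp : MonDualData C) (hDp : Dp.IsDualPair)
    [IsIso (F.c Dp.M Dp.Mv)] [IsIso (G.c Dp.M Dp.Mv)] (f : Dp.M ⟶ Dp.M) :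
    mtrace (F.inducedData Dp) ((λ_ (F.obj Dp.M)).hom ≫ F.map f ≫ (ρ_ (F.obj Dp.M)).inv)
      = mtrace (G.inducedData Dp)
          ((λ_ (G.obj Dp.M)).hom ≫ G.map f ≫ (ρ_ (G.obj Dp.M)).inv) := by
  rw [trace_conj F Dp f, trace_conj G Dp f]
  have hτ' : τ.app (𝟙_ C) ≫ inv G.i = inv F.i := by
    rw [IsIso.comp_inv_eq, ← τ.unit]; simp
  set t := Dp.η ≫ (f ▷ Dp.Mv) ≫ (β_ Dp.M Dp.Mv).hom ≫ Dp.ε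
  calc F.i ≫ F.map t ≫ inv F.i
      = F.i ≫ (F.map t ≫ τ.app (𝟙_ C)) ≫ inv G.i := by
        rw [assoc, hτ']
    _ = (F.i ≫ τ.app (𝟙_ C)) ≫ G.map t ≫ inv G.i := by
        rw [τ.naturality t]; simp
    _ = G.i ≫ G.map t ≫ inv G.i := by rw [τ.unit]
end

section
/- Involutivity of the shadow isomorphism: For any shadow ⟦−⟧ on a bicategory B and any 1-cells M : R → S and N : S → R, the composite ⟦M ⊙ N⟧ →θ_{M,N} ⟦N ⊙ M⟧ →θ_{N,M} ⟦M ⊙ N⟧ is the identity. -/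
open CategoryTheory Category

universe w v u w' v' u' v₁ u₁ v₂ u₂

/-- The data of a candidate dual pair in a bicategory (horizontal composition written in
diagrammatic order): 1-cells `M : R ⟶ S` and `Mv : S ⟶ R` together with a coevaluation
`η : 𝟙 R ⟶ M ≫ Mv` and an evaluation `ε : Mv ≫ M ⟶ 𝟙 S`. -/
structure BicatDualData {B : Type u} [Bicategory.{w, v} B] (R S : B) where
  M : R ⟶ S
  Mv : S ⟶ R
  η : 𝟙 R ⟶ M ≫ Mv
  ε : Mv ≫ M ⟶ 𝟙 S

open Bicategory

/-- The two triangle identities, saying that `(M, Mv, η, ε)` is a dual pair, i.e. that `M`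
is right dualizable with right dual `Mv`. -/
def BicatDualData.IsDualPair {B : Type u} [Bicategory.{w, v} B] {R S : B}
    (D : BicatDualData R S) : Prop :=
  ((λ_ D.M).inv ≫ (D.η ▷ D.M) ≫ (α_ D.M D.Mv D.M).hom ≫ (D.M ◁ D.ε) ≫ (ρ_ D.M).hom
      = 𝟙 D.M) ∧
  ((ρ_ D.Mv).inv ≫ (D.Mv ◁ D.η) ≫ (α_ D.Mv D.M D.Mv).inv ≫ (D.ε ▷ D.Mv) ≫ (λ_ D.Mv).hom
      = 𝟙 D.Mv)

/-- A shadow on a bicategory `B` with values in a category `V`: functors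
`⟦-⟧ : B(R,R) ⥤ V` for every 0-cell `R`, together with natural isomorphisms
`θ_{M,N} : ⟦M ≫ N⟧ ≅ ⟦N ≫ M⟧` satisfying the hexagon and unit axioms. -/
structure Shadow (B : Type u) [Bicategory.{w, v} B] (V : Type u₁) [Category.{v₁} V] where
  sh : ∀ R : B, (R ⟶ R) ⥤ V
  θ : ∀ {R S : B} (M : R ⟶ S) (N : S ⟶ R), (sh R).obj (M ≫ N) ≅ (sh S).obj (N ≫ M)
  θ_natural : ∀ {R S : B} {M M' : R ⟶ S} {N N' : S ⟶ R} (f : M ⟶ M') (g : N ⟶ N'),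
    (sh R).map (f ▷ N ≫ M' ◁ g) ≫ (θ M' N').hom
      = (θ M N).hom ≫ (sh S).map (g ▷ M ≫ N' ◁ f)
  hexagon : ∀ {R S T : B} (M : R ⟶ S) (N : S ⟶ T) (P : T ⟶ R),
    (θ (M ≫ N) P).hom ≫ (sh T).map (α_ P M N).inv
      = (sh R).map (α_ M N P).hom ≫ (θ M (N ≫ P)).hom ≫ (sh S).map (α_ N P M).hom ≫
          (θ N (P ≫ M)).hom
  unit_right : ∀ {R : B} (M : R ⟶ R),
    (θ M (𝟙 R)).hom ≫ (sh R).map (λ_ M).hom = (sh R).map (ρ_ M).hom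
  unit_left : ∀ {R : B} (M : R ⟶ R),
    (θ (𝟙 R) M).hom ≫ (sh R).map (ρ_ M).hom = (sh R).map (λ_ M).hom

/-- The bicategorical trace of a 2-cell `f : Q ≫ M ⟶ M ≫ P` (`Q : R ⟶ R`, `P : S ⟶ S`)
with respect to a (candidate) dual pair `(M, Mv, η, ε)`, relative to a shadow: the composite
`⟦Q⟧ ≅ ⟦Q ⊙ U_R⟧ → ⟦Q ⊙ (M ⊙ M∨)⟧ ≅ ⟦(Q ⊙ M) ⊙ M∨⟧ → ⟦(M ⊙ P) ⊙ M∨⟧ ≅θ ⟦M∨ ⊙ (M ⊙ P)⟧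
≅ ⟦(M∨ ⊙ M) ⊙ P⟧ → ⟦U_S ⊙ P⟧ ≅ ⟦P⟧`. -/
def btrace {B : Type u} [Bicategory.{w, v} B] {V : Type u₁} [Category.{v₁} V]
    (sh : Shadow B V) {R S : B} (D : BicatDualData R S) {Q : R ⟶ R} {P : S ⟶ S}
    (f : Q ≫ D.M ⟶ D.M ≫ P) : (sh.sh R).obj Q ⟶ (sh.sh S).obj P :=
  (sh.sh R).map ((ρ_ Q).inv ≫ (Q ◁ D.η) ≫ (α_ Q D.M D.Mv).inv ≫ (f ▷ D.Mv)) ≫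
    (sh.θ (D.M ≫ P) D.Mv).hom ≫
    (sh.sh S).map ((α_ D.Mv D.M P).inv ≫ (D.ε ▷ P) ≫ (λ_ P).hom)

/-- Involutivity of the shadow isomorphism: `θ_{N,M} ∘ θ_{M,N} = id` for any shadow and any
1-cells `M : R ⟶ S`, `N : S ⟶ R`. -/
theorem shadow_theta_involutive {B : Type u} [Bicategory.{w, v} B] {V : Type u₁}
    [Category.{v₁} V] (sh : Shadow B V) {R S : B} (M : R ⟶ S) (N : S ⟶ R) :
    (sh.θ M N).hom ≫ (sh.θ N M).hom = 𝟙 ((sh.sh R).obj (M ≫ N)) := by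
  have n1 := sh.θ_natural (𝟙 M) (ρ_ N).inv
  have n2 := sh.θ_natural (𝟙 N) (λ_ M).inv
  simp only [Bicategory.id_whiskerRight, Bicategory.whiskerLeft_id, id_comp, comp_id] at n1 n2
  -- n1 : map (M ◁ (ρ_ N).inv) ≫ (θ M (N ≫ 𝟙 R)).hom = (θ M N).hom ≫ map ((ρ_ N).inv ▷ M)
  have hθ1 : (sh.θ M (N ≫ 𝟙 R)).hom
      = (sh.sh R).map (M ◁ (ρ_ N).hom) ≫ (sh.θ M N).hom ≫ (sh.sh S).map ((ρ_ N).inv ▷ M) := by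
    rw [← n1, ← Functor.map_comp_assoc]; simp
  have hθ2 : (sh.θ N (𝟙 R ≫ M)).hom
      = (sh.sh S).map (N ◁ (λ_ M).hom) ≫ (sh.θ N M).hom ≫ (sh.sh R).map ((λ_ M).inv ▷ N) := by
    rw [← n2, ← Functor.map_comp_assoc]; simp
  have hθ0 : (sh.θ (M ≫ N) (𝟙 R)).hom
      = (sh.sh R).map (ρ_ (M ≫ N)).hom ≫ (sh.sh R).map (λ_ (M ≫ N)).inv := by
    rw [← sh.unit_right (M ≫ N)]; simp
  have h := sh.hexagon M N (𝟙 R)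
  rw [hθ0, hθ1, hθ2] at h
  simp only [assoc, ← Functor.map_comp_assoc] at h
  have c2 : (ρ_ N).inv ▷ M ≫ (α_ N (𝟙 R) M).hom ≫ N ◁ (λ_ M).hom = 𝟙 (N ≫ M) := by
    rw [Bicategory.triangle]; simp
  have c1 : (α_ M N (𝟙 R)).hom ≫ M ◁ (ρ_ N).hom = (ρ_ (M ≫ N)).hom := by
    rw [Bicategory.whiskerLeft_rightUnitor]; simp
  have c3 : (ρ_ (M ≫ N)).hom ≫ (λ_ (M ≫ N)).inv ≫ (α_ (𝟙 R) M N).inv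
      = (ρ_ (M ≫ N)).hom ≫ (λ_ M).inv ▷ N := by
    rw [Bicategory.leftUnitor_comp_inv]; simp
  rw [← Functor.map_comp, assoc, c3, c2, c1, CategoryTheory.Functor.map_id, id_comp,
    Functor.map_comp] at h
  have h' := (cancel_epi ((sh.sh R).map (ρ_ (M ≫ N)).hom)).mp h
  rw [← cancel_mono ((sh.sh R).map ((λ_ M).inv ▷ N)), assoc, id_comp]
  exact h'.symm
end

section
/- Tightening: Let B be a bicategory with a shadow ⟦−⟧, let (M, M∨, η, ε) be a dual pair with M : R → S, let f : Q ⊙ M → M ⊙ P be a 2-cell (Q : R → R, P : S → S), and let g : Q′ → Q and h : P → P′ be 2-cells. Then ⟦h⟧ ∘ tr(f) ∘ ⟦g⟧ = tr((id_M ⊙ h) ∘ f ∘ (g ⊙ id_M)) as morphisms ⟦Q′⟧ → ⟦P′⟧. -/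
open CategoryTheory Category

universe w v u w' v' u' v₁ u₁ v₂ u₂

open Bicategory

/-- Tightening: for a dual pair `(M, M∨, η, ε)` with `M : R ⟶ S`, a 2-cell
`f : Q ⊙ M ⟶ M ⊙ P`, and 2-cells `g : Q' ⟶ Q`, `h : P ⟶ P'`,
`⟦h⟧ ∘ tr(f) ∘ ⟦g⟧ = tr((id_M ⊙ h) ∘ f ∘ (g ⊙ id_M))`. -/
theorem btrace_tightening {B : Type u} [Bicategory.{w, v} B] {V : Type u₁}
    [Category.{v₁} V] (sh : Shadow B V) {R S : B}
    (D : BicatDualData R S) (hD : D.IsDualPair)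
    {Q Q' : R ⟶ R} {P P' : S ⟶ S} (f : Q ≫ D.M ⟶ D.M ≫ P) (g : Q' ⟶ Q) (h : P ⟶ P') :
    (sh.sh R).map g ≫ btrace sh D f ≫ (sh.sh S).map h
      = btrace sh D ((g ▷ D.M) ≫ f ≫ (D.M ◁ h)) := by
  have key := sh.θ_natural (D.M ◁ h) (𝟙 D.Mv)
  simp only [Bicategory.whiskerLeft_id, Bicategory.id_whiskerRight, Category.comp_id,
    Category.id_comp] at key
  have hA : g ≫ (ρ_ Q).inv ≫ (Q ◁ D.η) ≫ (α_ Q D.M D.Mv).inv ≫ (f ▷ D.Mv)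
      = (ρ_ Q').inv ≫ (Q' ◁ D.η) ≫ (α_ Q' D.M D.Mv).inv ≫ ((g ▷ D.M) ▷ D.Mv) ≫ (f ▷ D.Mv) := by
    rw [← Bicategory.associator_inv_naturality_left_assoc, Bicategory.whisker_exchange_assoc]
    simp
  have hB : (D.Mv ◁ (D.M ◁ h)) ≫ (α_ D.Mv D.M P').inv ≫ (D.ε ▷ P') ≫ (λ_ P').hom
      = (α_ D.Mv D.M P).inv ≫ (D.ε ▷ P) ≫ (λ_ P).hom ≫ h := by
    rw [Bicategory.associator_inv_naturality_right_assoc, Bicategory.whisker_exchange_assoc]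
    simp
  calc (sh.sh R).map g ≫ btrace sh D f ≫ (sh.sh S).map h
      = (sh.sh R).map (g ≫ (ρ_ Q).inv ≫ (Q ◁ D.η) ≫ (α_ Q D.M D.Mv).inv ≫ (f ▷ D.Mv)) ≫
          (sh.θ (D.M ≫ P) D.Mv).hom ≫
          (sh.sh S).map ((α_ D.Mv D.M P).inv ≫ (D.ε ▷ P) ≫ (λ_ P).hom ≫ h) := by
        simp [btrace]
    _ = (sh.sh R).map ((ρ_ Q').inv ≫ (Q' ◁ D.η) ≫ (α_ Q' D.M D.Mv).inv ≫
          (((g ▷ D.M) ≫ f) ▷ D.Mv)) ≫ (sh.θ (D.M ≫ P) D.Mv).hom ≫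
          (sh.sh S).map ((D.Mv ◁ (D.M ◁ h)) ≫ (α_ D.Mv D.M P').inv ≫ (D.ε ▷ P') ≫
            (λ_ P').hom) := by
        rw [hA, ← hB]; simp
    _ = btrace sh D ((g ▷ D.M) ≫ f ≫ (D.M ◁ h)) := by
        have key' := reassoc_of% key
        simp only [btrace, Bicategory.comp_whiskerRight, Functor.map_comp, Category.assoc, key']
end

section
/- Sliding (cyclicity of the bicategorical trace): Let B be a bicategory with a shadow ⟦−⟧, let (M, M∨, η_M, ε_M) and (N, N∨, η_N, ε_N) be dual pairs with M, N : R → S, and let f : Q ⊙ M → N ⊙ P and g : K ⊙ N → M ⊙ L be 2-cells (Q, K : R → R and P, L : S → S). Then the square commutes: θ_{P⊙L→L⊙P} ∘ tr_N((f ⊙ id_L) ∘ (id_Q ⊙ g)) = tr_M((g ⊙ id_P) ∘ (id_K ⊙ f)) ∘ θ_{Q⊙K→K⊙Q}, where tr_N is the trace with respect to (N, N∨) of the composite 2-cell (Q ⊙ K) ⊙ N → N ⊙ (P ⊙ L), tr_M is the trace with respect to (M, M∨) of the composite (K ⊙ Q) ⊙ M → M ⊙ (L ⊙ P), and associativity isomorphisms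 are inserted as needed. -/
open CategoryTheory Category

universe w v u w' v' u' v₁ u₁ v₂ u₂

open Bicategory

namespace Shadow
variable {B : Type u} [Bicategory.{w, v} B] {V : Type u₁} [Category.{v₁} V] (sh : Shadow B V)

lemma nat_left {R S : B} {M M' : R ⟶ S} (N : S ⟶ R) (f : M ⟶ M') :
    (sh.sh R).map (f ▷ N) ≫ (sh.θ M' N).hom = (sh.θ M N).hom ≫ (sh.sh S).map (N ◁ f) := by
  simpa using sh.θ_natural f (𝟙 N)

lemma nat_right {R S : B} (M : R ⟶ S) {N N' : S ⟶ R} (g : N ⟶ N') :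
    (sh.sh R).map (M ◁ g) ≫ (sh.θ M N').hom = (sh.θ M N).hom ≫ (sh.sh S).map (g ▷ M) := by
  simpa using sh.θ_natural (𝟙 M) g

lemma swap {R S : B} (M : R ⟶ S) (N : S ⟶ R) :
    (sh.θ M N).hom ≫ (sh.θ N M).hom = 𝟙 _ := by
  have e1 : (sh.θ M (N ≫ 𝟙 R)).hom
      = (sh.sh R).map (M ◁ (ρ_ N).hom) ≫ (sh.θ M N).hom ≫ (sh.sh S).map ((ρ_ N).inv ▷ M) := by
    rw [reassoc_of% (sh.nat_right M (ρ_ N).hom)]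
    simp only [← CategoryTheory.Functor.map_comp, hom_inv_whiskerRight, CategoryTheory.Functor.map_id, comp_id]
  have e2 : (sh.θ N (𝟙 R ≫ M)).hom
      = (sh.sh S).map (N ◁ (λ_ M).hom) ≫ (sh.θ N M).hom ≫ (sh.sh R).map ((λ_ M).inv ▷ N) := by
    rw [reassoc_of% (sh.nat_right N (λ_ M).hom)]
    simp only [← CategoryTheory.Functor.map_comp, hom_inv_whiskerRight, CategoryTheory.Functor.map_id, comp_id]
  have e3 : (sh.θ (M ≫ N) (𝟙 R)).hom
      = (sh.sh R).map (ρ_ (M ≫ N)).hom ≫ (sh.sh R).map (λ_ (M ≫ N)).inv := by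
    rw [← sh.unit_right (M ≫ N)]
    simp only [assoc, ← CategoryTheory.Functor.map_comp, Iso.hom_inv_id,
      CategoryTheory.Functor.map_id, comp_id]
  have A : (sh.sh R).map (ρ_ (M ≫ N)).hom
      = (sh.sh R).map (α_ M N (𝟙 R)).hom ≫ (sh.sh R).map (M ◁ (ρ_ N).hom) := by
    rw [← CategoryTheory.Functor.map_comp]; congr 1; bicategory
  have Bq : (sh.sh S).map ((ρ_ N).inv ▷ M) ≫ (sh.sh S).map (α_ N (𝟙 R) M).hom ≫
      (sh.sh S).map (N ◁ (λ_ M).hom) = 𝟙 _ := by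
    rw [← CategoryTheory.Functor.map_comp, ← CategoryTheory.Functor.map_comp]
    rw [show (ρ_ N).inv ▷ M ≫ (α_ N (𝟙 R) M).hom ≫ (N ◁ (λ_ M).hom) = 𝟙 (N ≫ M) from by
      bicategory]
    simp
  have C : (sh.sh R).map (λ_ (M ≫ N)).inv ≫ (sh.sh R).map (α_ (𝟙 R) M N).inv
      = (sh.sh R).map ((λ_ M).inv ▷ N) := by
    rw [← CategoryTheory.Functor.map_comp]; congr 1; bicategory
  have main : (sh.sh R).map (ρ_ (M ≫ N)).hom ≫ (sh.θ M N).hom ≫ (sh.θ N M).hom ≫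
        (sh.sh R).map ((λ_ M).inv ▷ N)
      = (sh.sh R).map (ρ_ (M ≫ N)).hom ≫ (sh.sh R).map ((λ_ M).inv ▷ N) := by
    calc (sh.sh R).map (ρ_ (M ≫ N)).hom ≫ (sh.θ M N).hom ≫ (sh.θ N M).hom ≫
          (sh.sh R).map ((λ_ M).inv ▷ N)
        = (sh.sh R).map (α_ M N (𝟙 R)).hom ≫ ((sh.sh R).map (M ◁ (ρ_ N).hom) ≫
            (sh.θ M N).hom ≫ (sh.sh S).map ((ρ_ N).inv ▷ M)) ≫
            (sh.sh S).map (α_ N (𝟙 R) M).hom ≫ ((sh.sh S).map (N ◁ (λ_ M).hom) ≫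
            (sh.θ N M).hom ≫ (sh.sh R).map ((λ_ M).inv ▷ N)) := by
          rw [A]; simp only [assoc]; rw [reassoc_of% Bq]
      _ = (sh.sh R).map (α_ M N (𝟙 R)).hom ≫ (sh.θ M (N ≫ 𝟙 R)).hom ≫
            (sh.sh S).map (α_ N (𝟙 R) M).hom ≫ (sh.θ N (𝟙 R ≫ M)).hom := by
          rw [e1, e2]
      _ = (sh.θ (M ≫ N) (𝟙 R)).hom ≫ (sh.sh R).map (α_ (𝟙 R) M N).inv := by
          rw [sh.hexagon M N (𝟙 R)]
      _ = (sh.sh R).map (ρ_ (M ≫ N)).hom ≫ (sh.sh R).map (λ_ (M ≫ N)).inv ≫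
            (sh.sh R).map (α_ (𝟙 R) M N).inv := by rw [e3]; simp only [assoc]
      _ = (sh.sh R).map (ρ_ (M ≫ N)).hom ≫ (sh.sh R).map ((λ_ M).inv ▷ N) := by
          rw [C]
  have main' := (cancel_epi ((sh.sh R).map (ρ_ (M ≫ N)).hom)).mp main
  rw [← assoc] at main'
  exact (cancel_mono ((sh.sh R).map ((λ_ M).inv ▷ N))).mp (by rw [main', id_comp])

lemma fuse {R S₁ S₂ : B} (X : R ⟶ S₁) (Y : S₁ ⟶ S₂) (Z : S₂ ⟶ R) :
    (sh.θ (X ≫ Y) Z).hom ≫ (sh.sh S₂).map (α_ Z X Y).inv ≫ (sh.θ (Z ≫ X) Y).hom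
      = (sh.sh R).map (α_ X Y Z).hom ≫ (sh.θ X (Y ≫ Z)).hom ≫
          (sh.sh S₁).map (α_ Y Z X).hom := by
  rw [reassoc_of% (sh.hexagon X Y Z)]
  rw [sh.swap Y (Z ≫ X), comp_id]

end Shadow

section Claims
variable {B : Type u} [Bicategory.{w, v} B]

lemma claimII {R S : B} (M : R ⟶ S) (Mv : S ⟶ R) (εM : Mv ≫ M ⟶ 𝟙 S)
    (N : R ⟶ S) (Nv : S ⟶ R) (ηN : 𝟙 R ⟶ N ≫ Nv) (εN : Nv ≫ N ⟶ 𝟙 S)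
    (hN1 : (λ_ N).inv ≫ (ηN ▷ N) ≫ (α_ N Nv N).hom ≫ (N ◁ εN) ≫ (ρ_ N).hom = 𝟙 N)
    {K : R ⟶ R} {P L : S ⟶ S} (g : K ≫ N ⟶ M ≫ L) :
    (α_ Mv K (N ≫ P)).hom ≫ (Mv ◁ (α_ K N P).inv) ≫
        (Mv ◁ ((g ▷ P) ≫ (α_ M L P).hom)) ≫ (α_ Mv M (L ≫ P)).inv ≫
        (εM ▷ (L ≫ P)) ≫ (λ_ (L ≫ P)).hom
      = (((ρ_ (Mv ≫ K)).inv ≫ ((Mv ≫ K) ◁ ηN) ≫ (α_ (Mv ≫ K) N Nv).inv ≫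
          (((α_ Mv K N).hom ≫ (Mv ◁ g) ≫ (α_ Mv M L).inv ≫ (εM ▷ L) ≫ (λ_ L).hom) ▷ Nv))
            ▷ (N ≫ P)) ≫
          (α_ L Nv (N ≫ P)).hom ≫
          (L ◁ ((α_ Nv N P).inv ≫ (εN ▷ P) ≫ (λ_ P).hom)) := by
  set ψ := (α_ Mv K N).hom ≫ (Mv ◁ g) ≫ (α_ Mv M L).inv ≫ (εM ▷ L) ≫ (λ_ L).hom with hψ
  have hb2 : (α_ Mv K (N ≫ P)).hom ≫ (Mv ◁ (α_ K N P).inv) ≫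
        (Mv ◁ ((g ▷ P) ≫ (α_ M L P).hom)) ≫ (α_ Mv M (L ≫ P)).inv ≫
        (εM ▷ (L ≫ P)) ≫ (λ_ (L ≫ P)).hom
      = (α_ (Mv ≫ K) N P).inv ≫ (ψ ▷ P) := by
    rw [hψ]; bicategory
  have h1 : (((ρ_ (Mv ≫ K)).inv ≫ ((Mv ≫ K) ◁ ηN) ≫ (α_ (Mv ≫ K) N Nv).inv ≫ (ψ ▷ Nv))
            ▷ (N ≫ P)) ≫
          (α_ L Nv (N ≫ P)).hom ≫
          (L ◁ ((α_ Nv N P).inv ≫ (εN ▷ P) ≫ (λ_ P).hom))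
      = ((((ρ_ (Mv ≫ K)).inv ≫ ((Mv ≫ K) ◁ ηN) ≫ (α_ (Mv ≫ K) N Nv).inv) ▷ (N ≫ P)) ≫
          (α_ ((Mv ≫ K) ≫ N) Nv (N ≫ P)).hom ≫
          (((Mv ≫ K) ≫ N) ◁ (α_ Nv N P).inv)) ≫
          (ψ ▷ ((Nv ≫ N) ≫ P)) ≫ (L ◁ ((εN ▷ P) ≫ (λ_ P).hom)) := by
    bicategory
  have h2 : (ψ ▷ ((Nv ≫ N) ≫ P)) ≫ (L ◁ ((εN ▷ P) ≫ (λ_ P).hom))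
      = (((Mv ≫ K) ≫ N) ◁ ((εN ▷ P) ≫ (λ_ P).hom)) ≫ (ψ ▷ P) :=
    (whisker_exchange ψ ((εN ▷ P) ≫ (λ_ P).hom)).symm
  have h3 : ((((ρ_ (Mv ≫ K)).inv ≫ ((Mv ≫ K) ◁ ηN) ≫ (α_ (Mv ≫ K) N Nv).inv) ▷ (N ≫ P)) ≫
          (α_ ((Mv ≫ K) ≫ N) Nv (N ≫ P)).hom ≫
          (((Mv ≫ K) ≫ N) ◁ (α_ Nv N P).inv)) ≫
          (((Mv ≫ K) ≫ N) ◁ ((εN ▷ P) ≫ (λ_ P).hom))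
      = (α_ (Mv ≫ K) N P).inv := by
    have h3' : (((((ρ_ (Mv ≫ K)).inv ≫ ((Mv ≫ K) ◁ ηN) ≫ (α_ (Mv ≫ K) N Nv).inv) ▷ (N ≫ P)) ≫
          (α_ ((Mv ≫ K) ≫ N) Nv (N ≫ P)).hom ≫
          (((Mv ≫ K) ≫ N) ◁ (α_ Nv N P).inv)) ≫
          (((Mv ≫ K) ≫ N) ◁ ((εN ▷ P) ≫ (λ_ P).hom))) ≫ (α_ (Mv ≫ K) N P).hom
        = (Mv ≫ K) ◁ (((λ_ N).inv ≫ (ηN ▷ N) ≫ (α_ N Nv N).hom ≫ (N ◁ εN) ≫ (ρ_ N).hom) ▷ P) := by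
      bicategory
    rw [hN1] at h3'
    simp only [id_whiskerRight, Bicategory.whiskerLeft_id] at h3'
    rw [← cancel_mono (α_ (Mv ≫ K) N P).hom]
    simpa using h3'
  rw [hb2, h1, h2]; simp only [assoc]; rw [reassoc_of% h3]

lemma claimI {R S : B} (M : R ⟶ S) (Mv : S ⟶ R) (ηM : 𝟙 R ⟶ M ≫ Mv) (εM : Mv ≫ M ⟶ 𝟙 S)
    (hM1 : (λ_ M).inv ≫ (ηM ▷ M) ≫ (α_ M Mv M).hom ≫ (M ◁ εM) ≫ (ρ_ M).hom = 𝟙 M)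
    (N : R ⟶ S) (Nv : S ⟶ R) (ηN : 𝟙 R ⟶ N ≫ Nv)
    {Q K : R ⟶ R} {P L : S ⟶ S} (f : Q ≫ M ⟶ N ≫ P) (g : K ≫ N ⟶ M ≫ L) :
    (((ρ_ Q).inv ≫ (Q ◁ ηM) ≫ (α_ Q M Mv).inv ≫ (f ▷ Mv)) ▷ K) ≫
        (α_ (N ≫ P) Mv K).hom ≫
        ((N ≫ P) ◁ ((ρ_ (Mv ≫ K)).inv ≫ ((Mv ≫ K) ◁ ηN) ≫ (α_ (Mv ≫ K) N Nv).inv ≫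
          (((α_ Mv K N).hom ≫ (Mv ◁ g) ≫ (α_ Mv M L).inv ≫ (εM ▷ L) ≫ (λ_ L).hom) ▷ Nv)))
      = (ρ_ (Q ≫ K)).inv ≫ ((Q ≫ K) ◁ ηN) ≫ (α_ (Q ≫ K) N Nv).inv ≫
          (((α_ Q K N).hom ≫ (Q ◁ g) ≫ (α_ Q M L).inv) ▷ Nv) ≫
          (α_ (Q ≫ M) L Nv).hom ≫ (f ▷ (L ≫ Nv)) := by
  set ψ := (α_ Mv K N).hom ≫ (Mv ◁ g) ≫ (α_ Mv M L).inv ≫ (εM ▷ L) ≫ (λ_ L).hom with hψ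
  set gd := (ρ_ (Mv ≫ K)).inv ≫ ((Mv ≫ K) ◁ ηN) ≫ (α_ (Mv ≫ K) N Nv).inv ≫ (ψ ▷ Nv)
    with hgd
  set c := (((ρ_ Q).inv ≫ (Q ◁ ηM) ≫ (α_ Q M Mv).inv) ▷ K) ≫ (α_ (Q ≫ M) Mv K).hom with hc
  have s0 : (((ρ_ Q).inv ≫ (Q ◁ ηM) ≫ (α_ Q M Mv).inv ≫ (f ▷ Mv)) ▷ K) ≫
        (α_ (N ≫ P) Mv K).hom ≫ ((N ≫ P) ◁ gd)
      = c ≫ ((Q ≫ M) ◁ gd) ≫ (f ▷ (L ≫ Nv)) := by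
    calc (((ρ_ Q).inv ≫ (Q ◁ ηM) ≫ (α_ Q M Mv).inv ≫ (f ▷ Mv)) ▷ K) ≫
          (α_ (N ≫ P) Mv K).hom ≫ ((N ≫ P) ◁ gd)
        = c ≫ (f ▷ (Mv ≫ K)) ≫ ((N ≫ P) ◁ gd) := by rw [hc]; bicategory
      _ = c ≫ ((Q ≫ M) ◁ gd) ≫ (f ▷ (L ≫ Nv)) := by rw [← whisker_exchange]
  have hcore : c ≫ ((Q ≫ M) ◁ gd)
      = (ρ_ (Q ≫ K)).inv ≫ ((Q ≫ K) ◁ ηN) ≫ (α_ (Q ≫ K) N Nv).inv ≫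
        (((α_ Q K N).hom ≫ (Q ◁ g) ≫ (α_ Q M L).inv) ▷ Nv) ≫ (α_ (Q ≫ M) L Nv).hom := by
    have hE : c ≫ ((Q ≫ M) ◁ gd)
        = c ≫ (ρ_ ((Q ≫ M) ≫ Mv ≫ K)).inv ≫ (((Q ≫ M) ≫ Mv ≫ K) ◁ ηN) ≫
          (α_ (Q ≫ M) (Mv ≫ K) (N ≫ Nv)).hom ≫ ((Q ≫ M) ◁ (α_ (Mv ≫ K) N Nv).inv) ≫
          ((Q ≫ M) ◁ (ψ ▷ Nv)) := by
      rw [hgd]; bicategory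
    have st2 : c ≫ (ρ_ ((Q ≫ M) ≫ Mv ≫ K)).inv ≫ (((Q ≫ M) ≫ Mv ≫ K) ◁ ηN)
        = (ρ_ (Q ≫ K)).inv ≫ ((Q ≫ K) ◁ ηN) ≫ (c ▷ (N ≫ Nv)) := by
      rw [reassoc_of% (rightUnitor_inv_naturality c), ← whisker_exchange]
    have h4 : (c ▷ N) ≫ (α_ (Q ≫ M) (Mv ≫ K) N).hom ≫ ((Q ≫ M) ◁ ψ)
        = (α_ Q K N).hom ≫ (Q ◁ g) ≫ (α_ Q M L).inv := by
      have h4a : (c ▷ N) ≫ (α_ (Q ≫ M) (Mv ≫ K) N).hom ≫ ((Q ≫ M) ◁ ψ)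
          = (α_ Q K N).hom ≫ (((ρ_ Q).inv ≫ (Q ◁ ηM) ≫ (α_ Q M Mv).inv) ▷ (K ≫ N)) ≫
            (((Q ≫ M) ≫ Mv) ◁ g) ≫ (α_ (Q ≫ M) Mv (M ≫ L)).hom ≫
            ((Q ≫ M) ◁ ((α_ Mv M L).inv ≫ (εM ▷ L) ≫ (λ_ L).hom)) := by
        rw [hc, hψ]; bicategory
      have h5 : (((ρ_ Q).inv ≫ (Q ◁ ηM) ≫ (α_ Q M Mv).inv) ▷ (M ≫ L)) ≫
            (α_ (Q ≫ M) Mv (M ≫ L)).hom ≫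
            ((Q ≫ M) ◁ ((α_ Mv M L).inv ≫ (εM ▷ L) ≫ (λ_ L).hom)) = (α_ Q M L).inv := by
        have h5' : ((((ρ_ Q).inv ≫ (Q ◁ ηM) ≫ (α_ Q M Mv).inv) ▷ (M ≫ L)) ≫
              (α_ (Q ≫ M) Mv (M ≫ L)).hom ≫
              ((Q ≫ M) ◁ ((α_ Mv M L).inv ≫ (εM ▷ L) ≫ (λ_ L).hom))) ≫ (α_ Q M L).hom
            = Q ◁ (((λ_ M).inv ≫ (ηM ▷ M) ≫ (α_ M Mv M).hom ≫ (M ◁ εM) ≫ (ρ_ M).hom) ▷ L) := by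
          bicategory
        rw [hM1] at h5'
        simp only [id_whiskerRight, Bicategory.whiskerLeft_id] at h5'
        rw [← cancel_mono (α_ Q M L).hom]
        simpa using h5'
      rw [h4a,
        ← reassoc_of% (whisker_exchange ((ρ_ Q).inv ≫ (Q ◁ ηM) ≫ (α_ Q M Mv).inv) g)]
      rw [h5]
    have hstar : (c ▷ (N ≫ Nv)) ≫ (α_ (Q ≫ M) (Mv ≫ K) (N ≫ Nv)).hom ≫
          ((Q ≫ M) ◁ (α_ (Mv ≫ K) N Nv).inv) ≫ ((Q ≫ M) ◁ (ψ ▷ Nv))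
        = (α_ (Q ≫ K) N Nv).inv ≫
          (((c ▷ N) ≫ (α_ (Q ≫ M) (Mv ≫ K) N).hom ≫ ((Q ≫ M) ◁ ψ)) ▷ Nv) ≫
          (α_ (Q ≫ M) L Nv).hom := by bicategory
    rw [hE, reassoc_of% st2, hstar, h4]
  rw [s0, reassoc_of% hcore]

end Claims

section Normal
variable {B : Type u} [Bicategory.{w, v} B] {V : Type u₁} [Category.{v₁} V]

lemma lhs_normal (sh : Shadow B V) {R S : B} (DN : BicatDualData R S) (M : R ⟶ S)
    {Q K : R ⟶ R} {P L : S ⟶ S} (f : Q ≫ M ⟶ DN.M ≫ P) (g : K ≫ DN.M ⟶ M ≫ L) :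
    btrace sh DN ((α_ Q K DN.M).hom ≫ (Q ◁ g) ≫ (α_ Q M L).inv ≫ (f ▷ L) ≫
          (α_ DN.M P L).hom) ≫ (sh.θ P L).hom
      = (sh.sh R).map ((ρ_ (Q ≫ K)).inv ≫ ((Q ≫ K) ◁ DN.η) ≫
            (α_ (Q ≫ K) DN.M DN.Mv).inv ≫
            (((α_ Q K DN.M).hom ≫ (Q ◁ g) ≫ (α_ Q M L).inv) ▷ DN.Mv) ≫
            (α_ (Q ≫ M) L DN.Mv).hom ≫ (f ▷ (L ≫ DN.Mv))) ≫
          (sh.θ (DN.M ≫ P) (L ≫ DN.Mv)).hom ≫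
          (sh.sh S).map ((α_ L DN.Mv (DN.M ≫ P)).hom ≫
            (L ◁ ((α_ DN.Mv DN.M P).inv ≫ (DN.ε ▷ P) ≫ (λ_ P).hom))) := by
  simp only [btrace, CategoryTheory.Functor.map_comp, assoc]
  rw [reassoc_of% (sh.nat_left DN.Mv ((α_ Q K DN.M).hom ≫ (Q ◁ g) ≫ (α_ Q M L).inv ≫
    (f ▷ L) ≫ (α_ DN.M P L).hom))]
  have E1 : (sh.sh S).map (DN.Mv ◁ ((α_ Q K DN.M).hom ≫ (Q ◁ g) ≫ (α_ Q M L).inv ≫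
        (f ▷ L) ≫ (α_ DN.M P L).hom)) ≫
        (sh.sh S).map (α_ DN.Mv DN.M (P ≫ L)).inv ≫
        (sh.sh S).map (DN.ε ▷ (P ≫ L)) ≫ (sh.sh S).map (λ_ (P ≫ L)).hom
      = (sh.sh S).map (DN.Mv ◁ ((α_ Q K DN.M).hom ≫ (Q ◁ g) ≫ (α_ Q M L).inv)) ≫
        (sh.sh S).map (α_ DN.Mv (Q ≫ M) L).inv ≫
        (sh.sh S).map (((DN.Mv ◁ f) ≫ (α_ DN.Mv DN.M P).inv ≫ (DN.ε ▷ P) ≫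
          (λ_ P).hom) ▷ L) := by
    simp only [← CategoryTheory.Functor.map_comp]; congr 1; bicategory
  rw [reassoc_of% E1]
  rw [← reassoc_of% (sh.nat_left DN.Mv ((α_ Q K DN.M).hom ≫ (Q ◁ g) ≫ (α_ Q M L).inv))]
  rw [sh.nat_left L ((DN.Mv ◁ f) ≫ (α_ DN.Mv DN.M P).inv ≫ (DN.ε ▷ P) ≫ (λ_ P).hom)]
  rw [reassoc_of% (sh.fuse (Q ≫ M) L DN.Mv)]
  have E2 : (sh.sh S).map (α_ L DN.Mv (Q ≫ M)).hom ≫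
        (sh.sh S).map (L ◁ ((DN.Mv ◁ f) ≫ (α_ DN.Mv DN.M P).inv ≫ (DN.ε ▷ P) ≫
          (λ_ P).hom))
      = (sh.sh S).map ((L ≫ DN.Mv) ◁ f) ≫
        (sh.sh S).map ((α_ L DN.Mv (DN.M ≫ P)).hom ≫
          (L ◁ ((α_ DN.Mv DN.M P).inv ≫ (DN.ε ▷ P) ≫ (λ_ P).hom))) := by
    simp only [← CategoryTheory.Functor.map_comp]; congr 1; bicategory
  rw [E2]
  rw [← reassoc_of% (sh.nat_left (L ≫ DN.Mv) f)]
  simp only [CategoryTheory.Functor.map_comp, assoc]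

lemma rhs_normal (sh : Shadow B V) {R S : B} (DM : BicatDualData R S) (N : R ⟶ S)
    {Q K : R ⟶ R} {P L : S ⟶ S} (f : Q ≫ DM.M ⟶ N ≫ P) (g : K ≫ N ⟶ DM.M ≫ L) :
    (sh.θ Q K).hom ≫ btrace sh DM ((α_ K Q DM.M).hom ≫ (K ◁ f) ≫ (α_ K N P).inv ≫
          (g ▷ P) ≫ (α_ DM.M L P).hom)
      = (sh.sh R).map ((((ρ_ Q).inv ≫ (Q ◁ DM.η) ≫ (α_ Q DM.M DM.Mv).inv ≫
            (f ▷ DM.Mv)) ▷ K) ≫ (α_ (N ≫ P) DM.Mv K).hom) ≫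
          (sh.θ (N ≫ P) (DM.Mv ≫ K)).hom ≫
          (sh.sh S).map ((α_ DM.Mv K (N ≫ P)).hom ≫ (DM.Mv ◁ (α_ K N P).inv) ≫
            (DM.Mv ◁ ((g ▷ P) ≫ (α_ DM.M L P).hom)) ≫ (α_ DM.Mv DM.M (L ≫ P)).inv ≫
            (DM.ε ▷ (L ≫ P)) ≫ (λ_ (L ≫ P)).hom) := by
  simp only [btrace, CategoryTheory.Functor.map_comp, assoc]
  have S1 : (sh.sh R).map (ρ_ (K ≫ Q)).inv ≫ (sh.sh R).map ((K ≫ Q) ◁ DM.η) ≫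
        (sh.sh R).map (α_ (K ≫ Q) DM.M DM.Mv).inv ≫
        (sh.sh R).map (((α_ K Q DM.M).hom ≫ (K ◁ f) ≫ (α_ K N P).inv ≫ (g ▷ P) ≫
          (α_ DM.M L P).hom) ▷ DM.Mv)
      = (sh.sh R).map (K ◁ ((ρ_ Q).inv ≫ (Q ◁ DM.η) ≫ (α_ Q DM.M DM.Mv).inv ≫
          (f ▷ DM.Mv))) ≫
        (sh.sh R).map (α_ K (N ≫ P) DM.Mv).inv ≫
        (sh.sh R).map ((α_ K N P).inv ▷ DM.Mv) ≫
        (sh.sh R).map (((g ▷ P) ≫ (α_ DM.M L P).hom) ▷ DM.Mv) := by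
    simp only [← CategoryTheory.Functor.map_comp]; congr 1; bicategory
  rw [reassoc_of% S1]
  rw [reassoc_of% (sh.nat_left DM.Mv ((g ▷ P) ≫ (α_ DM.M L P).hom))]
  rw [reassoc_of% (sh.nat_left DM.Mv (α_ K N P).inv)]
  rw [← reassoc_of% (sh.nat_left K ((ρ_ Q).inv ≫ (Q ◁ DM.η) ≫ (α_ Q DM.M DM.Mv).inv ≫
    (f ▷ DM.Mv)))]
  rw [reassoc_of% (sh.fuse (N ≫ P) DM.Mv K)]

end Normal

/-- Sliding (cyclicity of the bicategorical trace): for dual pairs `(M, M∨)`, `(N, N∨)` with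
`M, N : R ⟶ S` and 2-cells `f : Q ⊙ M ⟶ N ⊙ P`, `g : K ⊙ N ⟶ M ⊙ L`, the square
`θ ∘ tr_N((f ⊙ id_L)(id_Q ⊙ g)) = tr_M((g ⊙ id_P)(id_K ⊙ f)) ∘ θ` commutes. -/
theorem btrace_sliding {B : Type u} [Bicategory.{w, v} B] {V : Type u₁}
    [Category.{v₁} V] (sh : Shadow B V) {R S : B}
    (DM DN : BicatDualData R S) (hM : DM.IsDualPair) (hN : DN.IsDualPair)
    {Q K : R ⟶ R} {P L : S ⟶ S}
    (f : Q ≫ DM.M ⟶ DN.M ≫ P) (g : K ≫ DN.M ⟶ DM.M ≫ L) :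
    btrace sh DN ((α_ Q K DN.M).hom ≫ (Q ◁ g) ≫ (α_ Q DM.M L).inv ≫ (f ▷ L) ≫
          (α_ DN.M P L).hom) ≫ (sh.θ P L).hom
      = (sh.θ Q K).hom ≫
          btrace sh DM ((α_ K Q DM.M).hom ≫ (K ◁ f) ≫ (α_ K DN.M P).inv ≫ (g ▷ P) ≫
            (α_ DM.M L P).hom) := by
  rw [lhs_normal sh DN DM.M f g, rhs_normal sh DM DN.M f g]
  rw [claimII DM.M DM.Mv DM.ε DN.M DN.Mv DN.η DN.ε hN.1 g]
  simp only [CategoryTheory.Functor.map_comp, assoc]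
  rw [← reassoc_of% (sh.nat_right (DN.M ≫ P)
    ((ρ_ (DM.Mv ≫ K)).inv ≫ ((DM.Mv ≫ K) ◁ DN.η) ≫ (α_ (DM.Mv ≫ K) DN.M DN.Mv).inv ≫
      (((α_ DM.Mv K DN.M).hom ≫ (DM.Mv ◁ g) ≫ (α_ DM.Mv DM.M L).inv ≫ (DM.ε ▷ L) ≫
        (λ_ L).hom) ▷ DN.Mv)))]
  have FR : (sh.sh R).map (((ρ_ Q).inv ≫ (Q ◁ DM.η) ≫ (α_ Q DM.M DM.Mv).inv ≫
        (f ▷ DM.Mv)) ▷ K) ≫ (sh.sh R).map (α_ (DN.M ≫ P) DM.Mv K).hom ≫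
        (sh.sh R).map ((DN.M ≫ P) ◁ ((ρ_ (DM.Mv ≫ K)).inv ≫ ((DM.Mv ≫ K) ◁ DN.η) ≫
          (α_ (DM.Mv ≫ K) DN.M DN.Mv).inv ≫
          (((α_ DM.Mv K DN.M).hom ≫ (DM.Mv ◁ g) ≫ (α_ DM.Mv DM.M L).inv ≫ (DM.ε ▷ L) ≫
            (λ_ L).hom) ▷ DN.Mv)))
      = (sh.sh R).map (ρ_ (Q ≫ K)).inv ≫ (sh.sh R).map ((Q ≫ K) ◁ DN.η) ≫
        (sh.sh R).map (α_ (Q ≫ K) DN.M DN.Mv).inv ≫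
        (sh.sh R).map (((α_ Q K DN.M).hom ≫ (Q ◁ g) ≫ (α_ Q DM.M L).inv) ▷ DN.Mv) ≫
        (sh.sh R).map (α_ (Q ≫ DM.M) L DN.Mv).hom ≫
        (sh.sh R).map (f ▷ (L ≫ DN.Mv)) := by
    simp only [← CategoryTheory.Functor.map_comp]
    congr 1
    try simp only [assoc]
    exact claimI DM.M DM.Mv DM.η DM.ε hM.1 DN.M DN.Mv DN.η f g
  rw [reassoc_of% FR]
end

section
/- Duals invert conjunctional transformations: Let F, G : B → C be lax functors of bicategories, let α : F → G be a conjunctional transformation, and let (M, M∨, η, ε) be a dual pair in B with M : R → S such that both F and G preserve this dual (i.e., i^F_R, i^F_S, c^F_{M,M∨}, i^G_R, i^G_S, and c^G_{M,M∨} are all invertible, giving induced dual pairs (F(M), F(M∨)) and (G(M), G(M∨)) in C). Then the component α_M : F(M) ⊙ α_S → α_R ⊙ G(M) is an invertible 2-cell, whose inverse is the mate of α_{M∨}: the composite α_R ⊙ G(M) → (F(M) ⊙ F(M∨)) ⊙ (α_R ⊙ G(M)) → F(M) ⊙ ((α_S ⊙ G(M∨)) ⊙ G(M)) → F(M) ⊙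 α_S obtained by whiskering with the coevaluation of (F(M), F(M∨)), then with α_{M∨}, then with the evaluation of (G(M), G(M∨)) (structural isomorphisms inserted as needed). -/
open CategoryTheory Category

universe w v u w' v' u' v₁ u₁ v₂ u₂

open Bicategory

/-- The image duality data of `(M, M∨, η, ε)` under a lax functor `F` whose relevant
structural 2-cells are invertible: the coevaluation is `c_{M,M∨}⁻¹ ∘ F(η) ∘ i_R` and the
evaluation is `i_S⁻¹ ∘ F(ε) ∘ c_{M∨,M}`. -/
noncomputable abbrev laxImage {B : Type u} {C : Type u'} [Bicategory.{w, v} B]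
    [Bicategory.{w', v'} C] (F : LaxFunctor B C) {R S : B} (D : BicatDualData R S)
    [IsIso (F.mapId R)] [IsIso (F.mapId S)] [IsIso (F.mapComp D.M D.Mv)] :
    BicatDualData (F.obj R) (F.obj S) :=
  ⟨F.map D.M, F.map D.Mv, F.mapId R ≫ F.map₂ D.η ≫ inv (F.mapComp D.M D.Mv),
    F.mapComp D.Mv D.M ≫ F.map₂ D.ε ≫ inv (F.mapId S)⟩

/-- A conjunctional transformation `α : F ⟶ G` between lax functors of bicategories: for
each 0-cell `R` a dual pair `(α_R, α_R∨, η_R, ε_R)` with `α_R : F R ⟶ G R`, and for each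
1-cell `M : R ⟶ S` a 2-cell `α_M : F(M) ⊙ α_S ⟶ α_R ⊙ G(M)`, satisfying naturality and
the unit and composition coherence axioms. -/
structure ConjTransformation {B : Type u} {C : Type u'} [Bicategory.{w, v} B]
    [Bicategory.{w', v'} C] (F G : LaxFunctor B C) where
  conj : ∀ R : B, BicatDualData (F.obj R) (G.obj R)
  conj_isDualPair : ∀ R : B, (conj R).IsDualPair
  app : ∀ {R S : B} (M : R ⟶ S), F.map M ≫ (conj S).M ⟶ (conj R).M ≫ G.map M
  naturality : ∀ {R S : B} {M N : R ⟶ S} (τ : M ⟶ N),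
    (F.map₂ τ ▷ (conj S).M) ≫ app N = app M ≫ ((conj R).M ◁ G.map₂ τ)
  unit : ∀ R : B,
    (F.mapId R ▷ (conj R).M) ≫ app (𝟙 R)
      = (λ_ ((conj R).M)).hom ≫ (ρ_ ((conj R).M)).inv ≫ ((conj R).M ◁ G.mapId R)
  comp : ∀ {R S T : B} (M : R ⟶ S) (N : S ⟶ T),
    (F.mapComp M N ▷ (conj T).M) ≫ app (M ≫ N)
      = (α_ (F.map M) (F.map N) ((conj T).M)).hom ≫ (F.map M ◁ app N) ≫
          (α_ (F.map M) ((conj S).M) (G.map N)).inv ≫ (app M ▷ G.map N) ≫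
          (α_ ((conj R).M) (G.map M) (G.map N)).hom ≫ ((conj R).M ◁ G.mapComp M N)

/-- The mate of `α_{M∨}`: the composite
`α_R ⊙ G(M) ⟶ (F(M) ⊙ F(M∨)) ⊙ (α_R ⊙ G(M)) ⟶ F(M) ⊙ ((α_S ⊙ G(M∨)) ⊙ G(M))
⟶ F(M) ⊙ α_S` obtained by whiskering with the coevaluation of the induced dual pair
`(F M, F M∨)`, then with `α_{M∨}`, then with the evaluation of the induced dual pair
`(G M, G M∨)` (structural isomorphisms inserted as needed). -/
noncomputable def ConjTransformation.dualMate {B : Type u} {C : Type u'}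
    [Bicategory.{w, v} B] [Bicategory.{w', v'} C] {F G : LaxFunctor B C}
    (t : ConjTransformation F G) {R S : B} (D : BicatDualData R S)
    [IsIso (F.mapId R)] [IsIso (F.mapId S)] [IsIso (F.mapComp D.M D.Mv)]
    [IsIso (G.mapId R)] [IsIso (G.mapId S)] [IsIso (G.mapComp D.M D.Mv)] :
    (t.conj R).M ≫ G.map D.M ⟶ F.map D.M ≫ (t.conj S).M :=
  (λ_ ((t.conj R).M ≫ G.map D.M)).inv ≫
    ((laxImage F D).η ▷ ((t.conj R).M ≫ G.map D.M)) ≫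
    (α_ (F.map D.M) (F.map D.Mv) ((t.conj R).M ≫ G.map D.M)).hom ≫
    (F.map D.M ◁ (α_ (F.map D.Mv) ((t.conj R).M) (G.map D.M)).inv) ≫
    (F.map D.M ◁ (t.app D.Mv ▷ G.map D.M)) ≫
    (F.map D.M ◁ (α_ ((t.conj S).M) (G.map D.Mv) (G.map D.M)).hom) ≫
    (F.map D.M ◁ ((t.conj S).M ◁ (laxImage G D).ε)) ≫
    (F.map D.M ◁ (ρ_ ((t.conj S).M)).hom)

section Aux
variable {B : Type u} {C : Type u'} [Bicategory.{w, v} B] [Bicategory.{w', v'} C]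

lemma laxImage_isDualPair (F : LaxFunctor B C) {R S : B} (D : BicatDualData R S)
    (hD : D.IsDualPair)
    [IsIso (F.mapId R)] [IsIso (F.mapId S)] [IsIso (F.mapComp D.M D.Mv)] :
    (laxImage F D).IsDualPair := by
  obtain ⟨h1, h2⟩ := hD
  constructor
  · show (λ_ (F.map D.M)).inv ≫
        ((F.mapId R ≫ F.map₂ D.η ≫ inv (F.mapComp D.M D.Mv)) ▷ F.map D.M) ≫
        (α_ _ _ _).hom ≫
        (F.map D.M ◁ (F.mapComp D.Mv D.M ≫ F.map₂ D.ε ≫ inv (F.mapId S))) ≫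
        (ρ_ (F.map D.M)).hom = 𝟙 (F.map D.M)
    have e1 : F.map D.M ◁ inv (F.mapId S) ≫ (ρ_ (F.map D.M)).hom
        = F.mapComp D.M (𝟙 S) ≫ F.map₂ (ρ_ D.M).hom := by
      rw [F.map₂_rightUnitor_hom, ← Bicategory.whiskerLeft_comp_assoc,
        IsIso.inv_hom_id, Bicategory.whiskerLeft_id, id_comp]
    simp only [comp_whiskerRight, Bicategory.whiskerLeft_comp, assoc]
    rw [e1, ← F.mapComp_naturality_right_assoc, F.mapComp_assoc_right_assoc,
      Iso.hom_inv_id_assoc, ← comp_whiskerRight_assoc (inv (F.mapComp D.M D.Mv)) (F.mapComp D.M D.Mv), IsIso.inv_hom_id, id_whiskerRight,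
      id_comp, ← F.mapComp_naturality_left_assoc, ← F.map₂_leftUnitor_assoc,
      ← F.map₂_comp_assoc, ← F.map₂_comp_assoc, ← F.map₂_comp_assoc, ← F.map₂_comp]
    simp only [assoc, h1, PrelaxFunctor.map₂_id]
  · show (ρ_ (F.map D.Mv)).inv ≫
        (F.map D.Mv ◁ (F.mapId R ≫ F.map₂ D.η ≫ inv (F.mapComp D.M D.Mv))) ≫
        (α_ _ _ _).inv ≫
        ((F.mapComp D.Mv D.M ≫ F.map₂ D.ε ≫ inv (F.mapId S)) ▷ F.map D.Mv) ≫
        (λ_ (F.map D.Mv)).hom = 𝟙 (F.map D.Mv)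
    have e1 : inv (F.mapId S) ▷ F.map D.Mv ≫ (λ_ (F.map D.Mv)).hom
        = F.mapComp (𝟙 S) D.Mv ≫ F.map₂ (λ_ D.Mv).hom := by
      rw [F.map₂_leftUnitor_hom, ← comp_whiskerRight_assoc,
        IsIso.inv_hom_id, id_whiskerRight, id_comp]
    simp only [comp_whiskerRight, Bicategory.whiskerLeft_comp, assoc]
    rw [e1, ← F.mapComp_naturality_left_assoc, F.mapComp_assoc_left_assoc,
      Iso.inv_hom_id_assoc,
      ← Bicategory.whiskerLeft_comp_assoc (F.map D.Mv) (inv (F.mapComp D.M D.Mv)) (F.mapComp D.M D.Mv), IsIso.inv_hom_id, Bicategory.whiskerLeft_id, id_comp,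
      ← F.mapComp_naturality_right_assoc, ← F.map₂_rightUnitor_assoc,
      ← F.map₂_comp_assoc, ← F.map₂_comp_assoc, ← F.map₂_comp_assoc, ← F.map₂_comp]
    simp only [assoc, h2, PrelaxFunctor.map₂_id]

lemma conj_keyS (F G : LaxFunctor B C) (t : ConjTransformation F G) {R S : B}
    (D : BicatDualData R S) [IsIso (F.mapId S)] [IsIso (G.mapId S)] :
    (F.map D.Mv ◁ t.app D.M) ≫ (α_ (F.map D.Mv) ((t.conj R).M) (G.map D.M)).inv ≫
      (t.app D.Mv ▷ G.map D.M) ≫ (α_ ((t.conj S).M) (G.map D.Mv) (G.map D.M)).hom ≫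
      ((t.conj S).M ◁ (G.mapComp D.Mv D.M ≫ G.map₂ D.ε ≫ inv (G.mapId S)))
    = (α_ (F.map D.Mv) (F.map D.M) ((t.conj S).M)).inv ≫
      ((F.mapComp D.Mv D.M ≫ F.map₂ D.ε ≫ inv (F.mapId S)) ▷ (t.conj S).M) ≫
      (λ_ ((t.conj S).M)).hom ≫ (ρ_ ((t.conj S).M)).inv := by
  have hu : t.app (𝟙 S) = (inv (F.mapId S) ▷ (t.conj S).M) ≫ (λ_ ((t.conj S).M)).hom ≫
      (ρ_ ((t.conj S).M)).inv ≫ ((t.conj S).M ◁ G.mapId S) := by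
    rw [← t.unit, ← comp_whiskerRight_assoc, IsIso.inv_hom_id, id_whiskerRight, id_comp]
  rw [← cancel_epi (α_ (F.map D.Mv) (F.map D.M) ((t.conj S).M)).hom]
  simp only [Bicategory.whiskerLeft_comp, comp_whiskerRight, assoc, Iso.hom_inv_id_assoc]
  rw [← reassoc_of% (t.comp D.Mv D.M), ← reassoc_of% (t.naturality D.ε), hu]
  simp only [comp_whiskerRight, assoc]
  rw [← Bicategory.whiskerLeft_comp, IsIso.hom_inv_id, Bicategory.whiskerLeft_id, comp_id]

lemma conj_keyR (F G : LaxFunctor B C) (t : ConjTransformation F G) {R S : B}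
    (D : BicatDualData R S) [IsIso (F.mapId R)] [IsIso (G.mapId R)]
    [IsIso (F.mapComp D.M D.Mv)] [IsIso (G.mapComp D.M D.Mv)] :
    ((F.mapId R ≫ F.map₂ D.η ≫ inv (F.mapComp D.M D.Mv)) ▷ (t.conj R).M) ≫
      (α_ (F.map D.M) (F.map D.Mv) ((t.conj R).M)).hom ≫
      (F.map D.M ◁ t.app D.Mv) ≫ (α_ (F.map D.M) ((t.conj S).M) (G.map D.Mv)).inv ≫
      (t.app D.M ▷ G.map D.Mv) ≫ (α_ ((t.conj R).M) (G.map D.M) (G.map D.Mv)).hom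
    = (λ_ ((t.conj R).M)).hom ≫ (ρ_ ((t.conj R).M)).inv ≫
      ((t.conj R).M ◁ (G.mapId R ≫ G.map₂ D.η ≫ inv (G.mapComp D.M D.Mv))) := by
  rw [← cancel_mono ((t.conj R).M ◁ G.mapComp D.M D.Mv)]
  simp only [Bicategory.whiskerLeft_comp, comp_whiskerRight, assoc,
    ← Bicategory.whiskerLeft_comp, IsIso.inv_hom_id, Bicategory.whiskerLeft_id, comp_id]
  rw [← t.comp D.M D.Mv, ← comp_whiskerRight_assoc (inv (F.mapComp D.M D.Mv))
    (F.mapComp D.M D.Mv), IsIso.inv_hom_id, id_whiskerRight, id_comp,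
    t.naturality D.η, reassoc_of% (t.unit R)]
  simp [Bicategory.whiskerLeft_comp]

end Aux

/-- "Duals invert" for conjunctional transformations: if both `F` and `G` preserve the
dual pair `(M, M∨, η, ε)`, then the component `α_M : F(M) ⊙ α_S ⟶ α_R ⊙ G(M)` is an
invertible 2-cell, whose inverse is the mate of `α_{M∨}`. -/
theorem conjTransformation_duals_invert {B : Type u} {C : Type u'}
    [Bicategory.{w, v} B] [Bicategory.{w', v'} C] (F G : LaxFunctor B C)
    (t : ConjTransformation F G) {R S : B} (D : BicatDualData R S) (hD : D.IsDualPair)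
    [IsIso (F.mapId R)] [IsIso (F.mapId S)] [IsIso (F.mapComp D.M D.Mv)]
    [IsIso (G.mapId R)] [IsIso (G.mapId S)] [IsIso (G.mapComp D.M D.Mv)] :
    t.app D.M ≫ t.dualMate D = 𝟙 (F.map D.M ≫ (t.conj S).M) ∧
      t.dualMate D ≫ t.app D.M = 𝟙 ((t.conj R).M ≫ G.map D.M) := by
  have hF1 : (λ_ (F.map D.M)).inv ≫
      ((F.mapId R ≫ F.map₂ D.η ≫ inv (F.mapComp D.M D.Mv)) ▷ F.map D.M) ≫
      (α_ (F.map D.M) (F.map D.Mv) (F.map D.M)).hom ≫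
      (F.map D.M ◁ (F.mapComp D.Mv D.M ≫ F.map₂ D.ε ≫ inv (F.mapId S))) ≫
      (ρ_ (F.map D.M)).hom = 𝟙 (F.map D.M) := (laxImage_isDualPair F D hD).1
  have hG1 : (λ_ (G.map D.M)).inv ≫
      ((G.mapId R ≫ G.map₂ D.η ≫ inv (G.mapComp D.M D.Mv)) ▷ G.map D.M) ≫
      (α_ (G.map D.M) (G.map D.Mv) (G.map D.M)).hom ≫
      (G.map D.M ◁ (G.mapComp D.Mv D.M ≫ G.map₂ D.ε ≫ inv (G.mapId S))) ≫
      (ρ_ (G.map D.M)).hom = 𝟙 (G.map D.M) := (laxImage_isDualPair G D hD).1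
  constructor
  · calc t.app D.M ≫ t.dualMate D
        = (λ_ (F.map D.M ≫ (t.conj S).M)).inv ≫
          (𝟙 (F.obj R) ◁ t.app D.M) ≫
          ((F.mapId R ≫ F.map₂ D.η ≫ inv (F.mapComp D.M D.Mv)) ▷
            ((t.conj R).M ≫ G.map D.M)) ≫
          (α_ (F.map D.M) (F.map D.Mv) ((t.conj R).M ≫ G.map D.M)).hom ≫
          (F.map D.M ◁ (α_ (F.map D.Mv) ((t.conj R).M) (G.map D.M)).inv) ≫
          (F.map D.M ◁ (t.app D.Mv ▷ G.map D.M)) ≫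
          (F.map D.M ◁ (α_ ((t.conj S).M) (G.map D.Mv) (G.map D.M)).hom) ≫
          (F.map D.M ◁ ((t.conj S).M ◁
            (G.mapComp D.Mv D.M ≫ G.map₂ D.ε ≫ inv (G.mapId S)))) ≫
          (F.map D.M ◁ (ρ_ ((t.conj S).M)).hom) := by
            unfold ConjTransformation.dualMate laxImage
            bicategory
      _ = (λ_ (F.map D.M ≫ (t.conj S).M)).inv ≫
          ((F.mapId R ≫ F.map₂ D.η ≫ inv (F.mapComp D.M D.Mv)) ▷
            (F.map D.M ≫ (t.conj S).M)) ≫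
          ((F.map D.M ≫ F.map D.Mv) ◁ t.app D.M) ≫
          (α_ (F.map D.M) (F.map D.Mv) ((t.conj R).M ≫ G.map D.M)).hom ≫
          (F.map D.M ◁ (α_ (F.map D.Mv) ((t.conj R).M) (G.map D.M)).inv) ≫
          (F.map D.M ◁ (t.app D.Mv ▷ G.map D.M)) ≫
          (F.map D.M ◁ (α_ ((t.conj S).M) (G.map D.Mv) (G.map D.M)).hom) ≫
          (F.map D.M ◁ ((t.conj S).M ◁
            (G.mapComp D.Mv D.M ≫ G.map₂ D.ε ≫ inv (G.mapId S)))) ≫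
          (F.map D.M ◁ (ρ_ ((t.conj S).M)).hom) := by
            rw [whisker_exchange_assoc]
      _ = (λ_ (F.map D.M ≫ (t.conj S).M)).inv ≫
          ((F.mapId R ≫ F.map₂ D.η ≫ inv (F.mapComp D.M D.Mv)) ▷
            (F.map D.M ≫ (t.conj S).M)) ≫
          (α_ (F.map D.M) (F.map D.Mv) (F.map D.M ≫ (t.conj S).M)).hom ≫
          (F.map D.M ◁ (α_ (F.map D.Mv) (F.map D.M) ((t.conj S).M)).inv) ≫
          (F.map D.M ◁ (α_ (F.map D.Mv) (F.map D.M) ((t.conj S).M)).hom) ≫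
          (F.map D.M ◁ ((F.map D.Mv ◁ t.app D.M) ≫
            (α_ (F.map D.Mv) ((t.conj R).M) (G.map D.M)).inv ≫
            (t.app D.Mv ▷ G.map D.M) ≫
            (α_ ((t.conj S).M) (G.map D.Mv) (G.map D.M)).hom ≫
            ((t.conj S).M ◁ (G.mapComp D.Mv D.M ≫ G.map₂ D.ε ≫ inv (G.mapId S))))) ≫
          (F.map D.M ◁ (ρ_ ((t.conj S).M)).hom) := by
            bicategory
      _ = (λ_ (F.map D.M ≫ (t.conj S).M)).inv ≫
          ((F.mapId R ≫ F.map₂ D.η ≫ inv (F.mapComp D.M D.Mv)) ▷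
            (F.map D.M ≫ (t.conj S).M)) ≫
          (α_ (F.map D.M) (F.map D.Mv) (F.map D.M ≫ (t.conj S).M)).hom ≫
          (F.map D.M ◁ (α_ (F.map D.Mv) (F.map D.M) ((t.conj S).M)).inv) ≫
          (F.map D.M ◁ (α_ (F.map D.Mv) (F.map D.M) ((t.conj S).M)).hom) ≫
          (F.map D.M ◁ ((α_ (F.map D.Mv) (F.map D.M) ((t.conj S).M)).inv ≫
            ((F.mapComp D.Mv D.M ≫ F.map₂ D.ε ≫ inv (F.mapId S)) ▷ (t.conj S).M) ≫
            (λ_ ((t.conj S).M)).hom ≫ (ρ_ ((t.conj S).M)).inv)) ≫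
          (F.map D.M ◁ (ρ_ ((t.conj S).M)).hom) := by
            rw [conj_keyS F G t D]
      _ = ((λ_ (F.map D.M)).inv ≫
          ((F.mapId R ≫ F.map₂ D.η ≫ inv (F.mapComp D.M D.Mv)) ▷ F.map D.M) ≫
          (α_ (F.map D.M) (F.map D.Mv) (F.map D.M)).hom ≫
          (F.map D.M ◁ (F.mapComp D.Mv D.M ≫ F.map₂ D.ε ≫ inv (F.mapId S))) ≫
          (ρ_ (F.map D.M)).hom) ▷ (t.conj S).M := by
            bicategory
      _ = 𝟙 (F.map D.M ≫ (t.conj S).M) := by rw [hF1, Bicategory.id_whiskerRight]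
  · calc t.dualMate D ≫ t.app D.M
        = (λ_ ((t.conj R).M ≫ G.map D.M)).inv ≫
          ((F.mapId R ≫ F.map₂ D.η ≫ inv (F.mapComp D.M D.Mv)) ▷
            ((t.conj R).M ≫ G.map D.M)) ≫
          (α_ (F.map D.M) (F.map D.Mv) ((t.conj R).M ≫ G.map D.M)).hom ≫
          (F.map D.M ◁ (α_ (F.map D.Mv) ((t.conj R).M) (G.map D.M)).inv) ≫
          (F.map D.M ◁ (t.app D.Mv ▷ G.map D.M)) ≫
          (F.map D.M ◁ (α_ ((t.conj S).M) (G.map D.Mv) (G.map D.M)).hom) ≫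
          (α_ (F.map D.M) ((t.conj S).M) (G.map D.Mv ≫ G.map D.M)).inv ≫
          ((F.map D.M ≫ (t.conj S).M) ◁
            (G.mapComp D.Mv D.M ≫ G.map₂ D.ε ≫ inv (G.mapId S))) ≫
          (t.app D.M ▷ 𝟙 (G.obj S)) ≫
          (ρ_ ((t.conj R).M ≫ G.map D.M)).hom := by
            unfold ConjTransformation.dualMate laxImage
            bicategory
      _ = (λ_ ((t.conj R).M ≫ G.map D.M)).inv ≫
          ((F.mapId R ≫ F.map₂ D.η ≫ inv (F.mapComp D.M D.Mv)) ▷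
            ((t.conj R).M ≫ G.map D.M)) ≫
          (α_ (F.map D.M) (F.map D.Mv) ((t.conj R).M ≫ G.map D.M)).hom ≫
          (F.map D.M ◁ (α_ (F.map D.Mv) ((t.conj R).M) (G.map D.M)).inv) ≫
          (F.map D.M ◁ (t.app D.Mv ▷ G.map D.M)) ≫
          (F.map D.M ◁ (α_ ((t.conj S).M) (G.map D.Mv) (G.map D.M)).hom) ≫
          (α_ (F.map D.M) ((t.conj S).M) (G.map D.Mv ≫ G.map D.M)).inv ≫
          (t.app D.M ▷ (G.map D.Mv ≫ G.map D.M)) ≫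
          (((t.conj R).M ≫ G.map D.M) ◁
            (G.mapComp D.Mv D.M ≫ G.map₂ D.ε ≫ inv (G.mapId S))) ≫
          (ρ_ ((t.conj R).M ≫ G.map D.M)).hom := by
            rw [whisker_exchange_assoc]
      _ = (λ_ ((t.conj R).M ≫ G.map D.M)).inv ≫
          (α_ (𝟙 (F.obj R)) ((t.conj R).M) (G.map D.M)).inv ≫
          ((((F.mapId R ≫ F.map₂ D.η ≫ inv (F.mapComp D.M D.Mv)) ▷ (t.conj R).M) ≫
            (α_ (F.map D.M) (F.map D.Mv) ((t.conj R).M)).hom ≫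
            (F.map D.M ◁ t.app D.Mv) ≫
            (α_ (F.map D.M) ((t.conj S).M) (G.map D.Mv)).inv ≫
            (t.app D.M ▷ G.map D.Mv) ≫
            (α_ ((t.conj R).M) (G.map D.M) (G.map D.Mv)).hom) ▷ G.map D.M) ≫
          (α_ ((t.conj R).M) (G.map D.M ≫ G.map D.Mv) (G.map D.M)).hom ≫
          ((t.conj R).M ◁ (α_ (G.map D.M) (G.map D.Mv) (G.map D.M)).hom) ≫
          ((t.conj R).M ◁ (G.map D.M ◁
            (G.mapComp D.Mv D.M ≫ G.map₂ D.ε ≫ inv (G.mapId S)))) ≫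
          ((t.conj R).M ◁ (ρ_ (G.map D.M)).hom) := by
            bicategory
      _ = (λ_ ((t.conj R).M ≫ G.map D.M)).inv ≫
          (α_ (𝟙 (F.obj R)) ((t.conj R).M) (G.map D.M)).inv ≫
          (((λ_ ((t.conj R).M)).hom ≫ (ρ_ ((t.conj R).M)).inv ≫
            ((t.conj R).M ◁
              (G.mapId R ≫ G.map₂ D.η ≫ inv (G.mapComp D.M D.Mv)))) ▷ G.map D.M) ≫
          (α_ ((t.conj R).M) (G.map D.M ≫ G.map D.Mv) (G.map D.M)).hom ≫
          ((t.conj R).M ◁ (α_ (G.map D.M) (G.map D.Mv) (G.map D.M)).hom) ≫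
          ((t.conj R).M ◁ (G.map D.M ◁
            (G.mapComp D.Mv D.M ≫ G.map₂ D.ε ≫ inv (G.mapId S)))) ≫
          ((t.conj R).M ◁ (ρ_ (G.map D.M)).hom) := by
            rw [conj_keyR F G t D]
      _ = (t.conj R).M ◁ ((λ_ (G.map D.M)).inv ≫
          ((G.mapId R ≫ G.map₂ D.η ≫ inv (G.mapComp D.M D.Mv)) ▷ G.map D.M) ≫
          (α_ (G.map D.M) (G.map D.Mv) (G.map D.M)).hom ≫
          (G.map D.M ◁ (G.mapComp D.Mv D.M ≫ G.map₂ D.ε ≫ inv (G.mapId S))) ≫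
          (ρ_ (G.map D.M)).hom) := by
            bicategory
      _ = 𝟙 ((t.conj R).M ≫ G.map D.M) := by rw [hG1, Bicategory.whiskerLeft_id]
end
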